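/- arXiv:1811.02876 — 4 statements merged into one kernel-verified Lean document; each statement's English description precedes it below -/
import Mathlib

section
/- Let v ∈ Γ be primitive with (v.v) < 0. Then the index [K_v : ℤh² + ℤv] equals 1 or 3. If the index is 1, then disc(K_v) = −3(v.v) and disc(K_v) ≡ 0 (mod 6). If the index is 3, then (v.v) ≡ 0 (mod 6), disc(K_v) = −(v.v)/3, and disc(K_v) ≡ 2 (mod 6). -/
open scoped BigOperators

noncomputable section

/-- The negative definite `E₈` Gram matrix. -/
def E8M : Matrix (Fin 8) (Fin 8) ℤ := - CartanMatrix.E₈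

/-- The Gram matrix of the cubic lattice `Γ̄ = E₈(-1)² ⊕ U² ⊕ I₀,₃` on `ℤ²³`. -/
def gramC : Fin 23 → Fin 23 → ℤ := fun i j =>
  if i.val < 8 ∧ j.val < 8 then
    E8M ⟨i.val % 8, Nat.mod_lt _ (by norm_num)⟩ ⟨j.val % 8, Nat.mod_lt _ (by norm_num)⟩
  else if 8 ≤ i.val ∧ i.val < 16 ∧ 8 ≤ j.val ∧ j.val < 16 then
    E8M ⟨(i.val - 8) % 8, Nat.mod_lt _ (by norm_num)⟩ ⟨(j.val - 8) % 8, Nat.mod_lt _ (by norm_num)⟩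
  else if (i.val = 16 ∧ j.val = 17) ∨ (i.val = 17 ∧ j.val = 16) ∨
      (i.val = 18 ∧ j.val = 19) ∨ (i.val = 19 ∧ j.val = 18) then 1
  else if 20 ≤ i.val ∧ i = j then -1
  else 0

/-- The bilinear form of the cubic lattice `Γ̄`. -/
def GB (x y : Fin 23 → ℤ) : ℤ := ∑ i, ∑ j, gramC i j * x i * y j

/-- The class `h² = (0,…,0,1,1,1)`. -/
def h2 : Fin 23 → ℤ := Pi.single 20 1 + Pi.single 21 1 + Pi.single 22 1

/-- A vector is primitive if it is not `m • w` with `|m| ≥ 2`. -/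
def PrimitiveC (v : Fin 23 → ℤ) : Prop :=
  ¬ ∃ (m : ℤ) (w : Fin 23 → ℤ), 2 ≤ |m| ∧ v = m • w

/-- Membership in `Γ = (h²)^⊥ ⊂ Γ̄`. -/
def inGamma (x : Fin 23 → ℤ) : Prop := GB h2 x = 0

lemma GB_add_right (x y z : Fin 23 → ℤ) : GB x (y + z) = GB x y + GB x z := by
  simp [GB, Pi.add_apply, mul_add, Finset.sum_add_distrib]

lemma GB_smul_right (c : ℤ) (x y : Fin 23 → ℤ) : GB x (c • y) = c * GB x y := by
  simp only [GB, Finset.mul_sum]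
  refine Finset.sum_congr rfl fun i _ => Finset.sum_congr rfl fun j _ => ?_
  simp only [Pi.smul_apply, smul_eq_mul]; ring

/-- `Γ = (h²)^⊥` as a submodule of `ℤ²³`. -/
def Gamma : Submodule ℤ (Fin 23 → ℤ) where
  carrier := {x | GB h2 x = 0}
  add_mem' := by
    intro a b ha hb
    simp only [Set.mem_setOf_eq] at *
    rw [GB_add_right, ha, hb, add_zero]
  zero_mem' := by simp [GB]
  smul_mem' := by
    intro c x hx
    simp only [Set.mem_setOf_eq] at *
    rw [GB_smul_right, hx, mul_zero]

/-- The saturation of a submodule. -/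
def sat {R M : Type*} [CommRing R] [IsDomain R] [AddCommGroup M] [Module R M] (N : Submodule R M) :
    Submodule R M where
  carrier := {x | ∃ n : R, n ≠ 0 ∧ n • x ∈ N}
  add_mem' := by
    rintro x y ⟨n, hn, hx⟩ ⟨m, hm, hy⟩
    refine ⟨n * m, mul_ne_zero hn hm, ?_⟩
    have h1 : (n * m) • (x + y) = m • (n • x) + n • (m • y) := by
      rw [smul_add, mul_comm n m, mul_smul, mul_smul, smul_comm m n y]
    rw [h1]
    exact N.add_mem (N.smul_mem m hx) (N.smul_mem n hy)
  zero_mem' := ⟨1, one_ne_zero, by simp⟩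
  smul_mem' := by
    rintro c x ⟨n, hn, hx⟩
    exact ⟨n, hn, by rw [smul_comm]; exact N.smul_mem c hx⟩

/-- The saturation `K_v` of `ℤh² + ℤv` in `Γ̄`. -/
def Kv (v : Fin 23 → ℤ) : Submodule ℤ (Fin 23 → ℤ) :=
  sat (Submodule.span ℤ ({h2, v} : Set (Fin 23 → ℤ)))

/-- `d` is the discriminant of `K_v`: some ℤ-basis of `K_v` has Gram determinant `d`. -/
def discIs (v : Fin 23 → ℤ) (d : ℤ) : Prop :=
  ∃ x y : Fin 23 → ℤ, Kv v = Submodule.span ℤ ({x, y} : Set (Fin 23 → ℤ)) ∧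
    d = GB x x * GB y y - GB x y * GB y x

/-- The index of `ℤh² + ℤv` in its saturation `K_v`. -/
def idx (v : Fin 23 → ℤ) : ℕ :=
  (Submodule.span ℤ ({h2, v} : Set (Fin 23 → ℤ))).toAddSubgroup.relIndex
    (Kv v).toAddSubgroup

/-- Isometries of the cubic lattice `Γ̄`. -/
def IsIsomC (g : (Fin 23 → ℤ) ≃ₗ[ℤ] (Fin 23 → ℤ)) : Prop := ∀ x y, GB (g x) (g y) = GB x y

end

-- ===================== auxiliary lemmas =====================

lemma gramC_symm : ∀ i j, gramC i j = gramC j i := by decide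

lemma GB_symm (x y : Fin 23 → ℤ) : GB x y = GB y x := by
  rw [GB, GB, Finset.sum_comm]
  exact Finset.sum_congr rfl fun i _ => Finset.sum_congr rfl fun j _ => by
    rw [gramC_symm]; ring

lemma GB_add_left (x y z : Fin 23 → ℤ) : GB (x + y) z = GB x z + GB y z := by
  rw [GB_symm, GB_add_right, GB_symm z x, GB_symm z y]

lemma GB_smul_left (c : ℤ) (x y : Fin 23 → ℤ) : GB (c • x) y = c * GB x y := by
  rw [GB_symm, GB_smul_right, GB_symm]

lemma GB_comb (p q r s : ℤ) (x y : Fin 23 → ℤ) :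
    GB (p • x + q • y) (r • x + s • y) =
      p*r * GB x x + p*s * GB x y + q*r * GB y x + q*s * GB y y := by
  simp only [GB_add_left, GB_add_right, GB_smul_left, GB_smul_right]
  ring

lemma sum_h2_mul (x : Fin 23 → ℤ) : ∑ j, h2 j * x j = x 20 + x 21 + x 22 := by
  have h : ∀ j : Fin 23, h2 j * x j =
      (if j = 20 then x j else 0) + ((if j = 21 then x j else 0) + (if j = 22 then x j else 0)) := by
    intro j
    simp [h2, Pi.single_apply, add_mul, ite_mul]
    ring
  rw [Finset.sum_congr rfl fun j _ => h j, Finset.sum_add_distrib, Finset.sum_add_distrib]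
  simp [Finset.sum_ite_eq']
  ring

lemma GB_h2_apply (x : Fin 23 → ℤ) : GB h2 x = -(x 20 + x 21 + x 22) := by
  have key : ∀ j, ∑ i, gramC i j * h2 i = -h2 j := by decide
  rw [GB, Finset.sum_comm]
  have h : ∀ j : Fin 23, (∑ i, gramC i j * h2 i * x j) = -(h2 j * x j) := by
    intro j
    rw [← Finset.sum_mul, key]; ring
  rw [Finset.sum_congr rfl fun j _ => h j, Finset.sum_neg_distrib, sum_h2_mul]

lemma GB_h2h2 : GB h2 h2 = -3 := by
  rw [GB_h2_apply]; decide

lemma sum_symm_diag (F : Fin 23 → Fin 23 → ZMod 2) (hF : ∀ i j, F i j = F j i) :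
    ∑ i, ∑ j, F i j = ∑ i, F i i := by
  rw [← Finset.sum_product', ← Finset.diag_union_offDiag (Finset.univ : Finset (Fin 23)),
    Finset.sum_union (Finset.disjoint_diag_offDiag _), Finset.sum_diag]
  have h0 : ∑ p ∈ (Finset.univ : Finset (Fin 23)).offDiag, F p.1 p.2 = 0 := by
    refine Finset.sum_involution (fun p _ => Prod.swap p) ?_ ?_ ?_ ?_
    · intro p _
      have ha : ∀ a : ZMod 2, a + a = 0 := by decide
      show F p.1 p.2 + F p.2 p.1 = 0
      rw [hF p.2 p.1]
      exact ha _
    · intro p hp _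
      rw [Finset.mem_offDiag] at hp
      intro hc
      exact hp.2.2 (congrArg Prod.fst hc).symm
    · intro p hp
      rw [Finset.mem_offDiag] at hp ⊢
      exact ⟨Finset.mem_univ _, Finset.mem_univ _, fun hc => hp.2.2 hc.symm⟩
    · intro p _
      rfl
  rw [h0, add_zero]

lemma GB_self_even (x : Fin 23 → ℤ) (hx : GB h2 x = 0) : 2 ∣ GB x x := by
  have h0 : x 20 + x 21 + x 22 = 0 := by
    rw [GB_h2_apply] at hx; linarith
  suffices hz : ((GB x x : ℤ) : ZMod 2) = 0 by
    exact_mod_cast (ZMod.intCast_zmod_eq_zero_iff_dvd (GB x x) 2).mp hz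
  have hcast : ((GB x x : ℤ) : ZMod 2)
      = ∑ i, ∑ j, ((gramC i j : ZMod 2)) * ((x i : ZMod 2)) * ((x j : ZMod 2)) := by
    rw [GB]; push_cast; rfl
  rw [hcast, sum_symm_diag _ (fun i j => by rw [gramC_symm]; ring)]
  have hd : ∀ i : Fin 23, ((gramC i i : ZMod 2)) = ((h2 i : ZMod 2)) := by decide
  have hsq : ∀ a : ZMod 2, a * a = a := by decide
  have : ∀ i : Fin 23, ((gramC i i : ZMod 2)) * (x i : ZMod 2) * (x i : ZMod 2)
      = ((h2 i * x i : ℤ) : ZMod 2) := by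
    intro i
    rw [mul_assoc, hsq, hd]; push_cast; ring
  rw [Finset.sum_congr rfl fun i _ => this i]
  rw [← Int.cast_sum]
  rw [sum_h2_mul, h0]
  norm_num

lemma prim_ne_zero {v : Fin 23 → ℤ} (hv : PrimitiveC v) : v ≠ 0 := by
  intro h
  exact hv ⟨2, 0, by norm_num, by simp [h]⟩

lemma prim_not_all_dvd {v : Fin 23 → ℤ} (hv : PrimitiveC v) {p : ℤ} (hp : 2 ≤ |p|)
    (h : ∀ i, p ∣ v i) : False := by
  choose w hw using h
  exact hv ⟨p, w, hp, funext fun i => by rw [Pi.smul_apply, smul_eq_mul]; exact hw i⟩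

lemma prim_bezout {v : Fin 23 → ℤ} (hv : PrimitiveC v) :
    ∃ c : Fin 23 → ℤ, ∑ i, c i * v i = 1 := by
  obtain ⟨g, hg⟩ := Submodule.IsPrincipal.principal (Ideal.span (Set.range v))
  have hdvd : ∀ i, g ∣ v i := by
    intro i
    have hm : v i ∈ Ideal.span (Set.range v) := Ideal.subset_span ⟨i, rfl⟩
    rw [hg] at hm
    exact Ideal.mem_span_singleton.mp hm
  have hgne : g ≠ 0 := by
    rintro rfl
    apply prim_ne_zero hv
    funext i
    simpa using hdvd i
  have habs : ¬ 2 ≤ |g| := fun h => prim_not_all_dvd hv h hdvd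
  have hunit : g = 1 ∨ g = -1 := by
    rcases abs_cases g with ⟨h1, h2⟩ | ⟨h1, h2⟩ <;> omega
  have hone : (1 : ℤ) ∈ Ideal.span (Set.range v) := by
    rw [hg]
    rcases hunit with rfl | rfl
    · exact Ideal.mem_span_singleton.mpr ⟨1, by norm_num⟩
    · exact Ideal.mem_span_singleton.mpr ⟨-1, by norm_num⟩
  obtain ⟨c, hc⟩ := (Submodule.mem_span_range_iff_exists_fun ℤ).mp hone
  exact ⟨c, by simpa [smul_eq_mul] using hc⟩

lemma prim_colinear {v : Fin 23 → ℤ} (hv : PrimitiveC v) {n m : ℤ} (hn : n ≠ 0)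
    {u : Fin 23 → ℤ} (h : n • u = m • v) : ∃ e : ℤ, u = e • v := by
  have hij : ∀ i j, u i * v j = u j * v i := by
    intro i j
    have hi := congrFun h i
    have hj := congrFun h j
    simp only [Pi.smul_apply, smul_eq_mul] at hi hj
    apply mul_left_cancel₀ hn
    linear_combination v j * hi - v i * hj
  obtain ⟨c, hc⟩ := prim_bezout hv
  refine ⟨∑ i, c i * u i, funext fun j => ?_⟩
  rw [Pi.smul_apply, smul_eq_mul]
  calc u j = u j * ∑ i, c i * v i := by rw [hc]; ring
  _ = ∑ i, c i * (u j * v i) := by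
      rw [Finset.mul_sum]; exact Finset.sum_congr rfl fun i _ => by ring
  _ = ∑ i, c i * (u i * v j) := Finset.sum_congr rfl fun i _ => by rw [hij i j]
  _ = (∑ i, c i * u i) * v j := by
      rw [Finset.sum_mul]; exact Finset.sum_congr rfl fun i _ => by ring

/-- For a primitive `v ∈ Γ` with `(v.v) < 0`, the index of `ℤh² + ℤv` in its
saturation `K_v` is `1` or `3`; if it is `1` then `disc K_v = -3(v.v) ≡ 0 (mod 6)`, and if it
is `3` then `(v.v) ≡ 0 (mod 6)` and `disc K_v = -(v.v)/3 ≡ 2 (mod 6)`. -/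
theorem stmt_1 (v : Fin 23 → ℤ) (hvG : inGamma v) (hv : PrimitiveC v)
    (hneg : GB v v < 0) :
    (idx v = 1 ∨ idx v = 3) ∧
    (idx v = 1 → ∀ d : ℤ, discIs v d → d = -3 * GB v v ∧ d % 6 = 0) ∧
    (idx v = 3 → GB v v % 6 = 0 ∧ ∀ d : ℤ, discIs v d → d = -(GB v v) / 3 ∧ d % 6 = 2) := by
  classical
  set N := Submodule.span ℤ ({h2, v} : Set (Fin 23 → ℤ)) with hN
  have hGB0 : GB h2 v = 0 := hvG
  have hvh2 : GB v h2 = 0 := by rw [GB_symm]; exact hvG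
  have hvne : v ≠ 0 := prim_ne_zero hv
  have hVeven : 2 ∣ GB v v := GB_self_even v hvG
  have h2_22 : h2 22 = 1 := by decide
  -- uniqueness of coefficients
  have uniq : ∀ a b a' b' : ℤ, a • h2 + b • v = a' • h2 + b' • v → a = a' ∧ b = b' := by
    intro a b a' b' hE
    have h1 : GB h2 (a • h2 + b • v) = -3 * a := by
      rw [GB_add_right, GB_smul_right, GB_smul_right, GB_h2h2, hGB0]; ring
    have h1' : GB h2 (a' • h2 + b' • v) = -3 * a' := by
      rw [GB_add_right, GB_smul_right, GB_smul_right, GB_h2h2, hGB0]; ring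
    have ha : a = a' := by rw [hE, h1'] at h1; linarith
    subst ha
    have hb : (b - b') • v = 0 := by
      have hbb : b • v = b' • v := by
        have := hE
        rwa [add_right_inj] at this
      rw [sub_smul, hbb, sub_self]
    rcases smul_eq_zero.mp hb with h | h
    · exact ⟨rfl, by omega⟩
    · exact absurd h hvne
  have hNK : N ≤ Kv v := by
    rw [hN]
    intro z hz
    exact ⟨1, one_ne_zero, by rwa [one_smul]⟩
  have hh2N : h2 ∈ N := Submodule.subset_span (Set.mem_insert _ _)
  have hvN : v ∈ N := Submodule.subset_span (Set.mem_insert_of_mem _ rfl)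
  -- every element of K_v becomes integral after multiplying by 3
  have threeSmul : ∀ x, x ∈ Kv v → ∃ a b : ℤ, (3:ℤ) • x = a • h2 + b • v := by
    intro x hx
    obtain ⟨n, hn, hmem⟩ := hx
    obtain ⟨c, d, hcd⟩ := Submodule.mem_span_pair.mp hmem
    have hng : n * GB h2 x = -3 * c := by
      have e1 : GB h2 (n • x) = n * GB h2 x := GB_smul_right _ _ _
      rw [← hcd, GB_add_right, GB_smul_right, GB_smul_right, GB_h2h2, hGB0] at e1
      linarith
    have hu : n • ((3:ℤ) • x + GB h2 x • h2) = (3 * d) • v := by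
      have hstep : n • ((3:ℤ) • x + GB h2 x • h2)
          = (3:ℤ) • (n • x) + (n * GB h2 x) • h2 := by module
      rw [hstep, ← hcd, hng]; module
    obtain ⟨e, he⟩ := prim_colinear hv hn hu
    refine ⟨-(GB h2 x), e, ?_⟩
    rw [← he]; module
  have hdown : ∀ (x : Fin 23 → ℤ) (a b : ℤ), (3:ℤ) • x = a • h2 + b • v →
      3 ∣ a → 3 ∣ b → x ∈ N := by
    rintro x a b h ⟨a', rfl⟩ ⟨b', rfl⟩
    have h3 : (3:ℤ) • x = (3:ℤ) • (a' • h2 + b' • v) := by rw [h]; module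
    have hinj := smul_right_injective (Fin 23 → ℤ) (by norm_num : (3:ℤ) ≠ 0) h3
    rw [hN]
    exact Submodule.mem_span_pair.mpr ⟨a', b', hinj.symm⟩
  have hB3 : ∀ b : ℤ, ¬ (3:ℤ) ∣ b → ∀ z : Fin 23 → ℤ, b • v = (3:ℤ) • z → False := by
    intro b hb z hz
    refine prim_not_all_dvd hv (p := 3) (by norm_num) fun i => ?_
    have hzi := congrFun hz i
    simp only [Pi.smul_apply, smul_eq_mul] at hzi
    rcases (Int.prime_three.2.2 b (v i) ⟨z i, hzi⟩) with h | h
    · exact absurd h hb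
    · exact h
  have hA3 : ∀ a : ℤ, ¬ (3:ℤ) ∣ a → ∀ z : Fin 23 → ℤ, a • h2 = (3:ℤ) • z → False := by
    intro a ha z hz
    have hzi := congrFun hz 22
    simp only [Pi.smul_apply, smul_eq_mul, h2_22, mul_one] at hzi
    exact ha ⟨z 22, hzi⟩
  have habNotN : ∀ (x : Fin 23 → ℤ) (a b : ℤ), (3:ℤ) • x = a • h2 + b • v → x ∉ N →
      ¬ (3:ℤ) ∣ a ∧ ¬ (3:ℤ) ∣ b := by
    intro x a b h hxN
    by_cases ha : (3:ℤ) ∣ a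
    · by_cases hb : (3:ℤ) ∣ b
      · exact absurd (hdown x a b h ha hb) hxN
      · obtain ⟨a', rfl⟩ := ha
        exfalso
        refine hB3 b hb (x - a' • h2) ?_
        rw [smul_sub, h]; module
    · by_cases hb : (3:ℤ) ∣ b
      · obtain ⟨b', rfl⟩ := hb
        exfalso
        refine hA3 a ha (x - b' • v) ?_
        rw [smul_sub, h]; module
      · exact ⟨ha, hb⟩
  -- the coefficient homomorphism on K_v
  have exch : ∀ x : (Kv v).toAddSubgroup, ∃ a b : ℤ,
      (3:ℤ) • (x : Fin 23 → ℤ) = a • h2 + b • v := fun x => threeSmul _ x.2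
  choose Af Bf hAB using exch
  let ψ : (Kv v).toAddSubgroup →+ ZMod 3 × ZMod 3 :=
    { toFun := fun x => (((Af x : ℤ) : ZMod 3), ((Bf x : ℤ) : ZMod 3))
      map_zero' := by
        have h0 := hAB 0
        have hz : ((0 : (Kv v).toAddSubgroup) : Fin 23 → ℤ) = 0 := rfl
        rw [hz, smul_zero] at h0
        have he : Af 0 • h2 + Bf 0 • v = (0:ℤ) • h2 + (0:ℤ) • v := by
          rw [← h0]; module
        obtain ⟨ha, hb⟩ := uniq _ _ _ _ he
        rw [Prod.ext_iff]
        constructor <;> simp [ha, hb]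
      map_add' := by
        intro x y
        have hco : ((x + y : (Kv v).toAddSubgroup) : Fin 23 → ℤ)
            = (x : Fin 23 → ℤ) + (y : Fin 23 → ℤ) := rfl
        have he : Af (x + y) • h2 + Bf (x + y) • v
            = (Af x + Af y) • h2 + (Bf x + Bf y) • v := by
          rw [← hAB (x + y), hco, smul_add, hAB x, hAB y]; module
        obtain ⟨ha, hb⟩ := uniq _ _ _ _ he
        rw [Prod.ext_iff]
        constructor <;> simp [ha, hb] <;> push_cast <;> ring }
  have hψ1 : ∀ x, (ψ x).1 = ((Af x : ℤ) : ZMod 3) := fun x => rfl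
  have hψ2 : ∀ x, (ψ x).2 = ((Bf x : ℤ) : ZMod 3) := fun x => rfl
  have hker : ψ.ker = N.toAddSubgroup.addSubgroupOf (Kv v).toAddSubgroup := by
    ext x
    rw [AddMonoidHom.mem_ker, AddSubgroup.mem_addSubgroupOf, Prod.ext_iff]
    constructor
    · rintro ⟨ha, hb⟩
      rw [hψ1] at ha
      rw [hψ2] at hb
      have ha' : (3:ℤ) ∣ Af x := by
        exact_mod_cast (ZMod.intCast_zmod_eq_zero_iff_dvd _ 3).mp ha
      have hb' : (3:ℤ) ∣ Bf x := by
        exact_mod_cast (ZMod.intCast_zmod_eq_zero_iff_dvd _ 3).mp hb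
      exact hdown _ _ _ (hAB x) ha' hb'
    · intro hxN
      have hxN' : (x : Fin 23 → ℤ) ∈ N := hxN
      rw [hN] at hxN'
      obtain ⟨c, d, hcd⟩ := Submodule.mem_span_pair.mp hxN'
      have he : Af x • h2 + Bf x • v = (3*c) • h2 + (3*d) • v := by
        rw [← hAB x, ← hcd]; module
      obtain ⟨ha, hb⟩ := uniq _ _ _ _ he
      rw [hψ1, hψ2]
      constructor
      · have hdc : (3:ℤ) ∣ Af x := ⟨c, ha⟩
        exact (ZMod.intCast_zmod_eq_zero_iff_dvd _ 3).mpr (by exact_mod_cast hdc)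
      · have hdd : (3:ℤ) ∣ Bf x := ⟨d, hb⟩
        exact (ZMod.intCast_zmod_eq_zero_iff_dvd _ 3).mpr (by exact_mod_cast hdd)
  have hidx : idx v = Nat.card ψ.range := by
    have h1 : idx v = (N.toAddSubgroup.addSubgroupOf (Kv v).toAddSubgroup).index := rfl
    rw [h1, ← hker, AddSubgroup.index_ker]
  have hcard9 : Nat.card (ZMod 3 × ZMod 3) = 9 := by
    simp [Nat.card_eq_fintype_card]
  have hdvd9 : Nat.card ψ.range ∣ 9 := hcard9 ▸ AddSubgroup.card_addSubgroup_dvd_card ψ.range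
  have hne9 : Nat.card ψ.range ≠ 9 := by
    intro hcard
    have htop : ψ.range = ⊤ := AddSubgroup.eq_top_of_card_eq _ (by rw [hcard, hcard9])
    have hmem : ((0, 1) : ZMod 3 × ZMod 3) ∈ ψ.range := by rw [htop]; trivial
    obtain ⟨x, hx⟩ := hmem
    have ha : ((Af x : ℤ) : ZMod 3) = 0 := by rw [← hψ1, hx]
    have hb : ((Bf x : ℤ) : ZMod 3) = 1 := by rw [← hψ2, hx]
    have ha' : (3:ℤ) ∣ Af x := by
      exact_mod_cast (ZMod.intCast_zmod_eq_zero_iff_dvd _ 3).mp ha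
    have hb' : ¬ (3:ℤ) ∣ Bf x := by
      intro hd
      have : ((Bf x : ℤ) : ZMod 3) = 0 :=
        (ZMod.intCast_zmod_eq_zero_iff_dvd _ 3).mpr (by exact_mod_cast hd)
      rw [hb] at this
      exact one_ne_zero this
    obtain ⟨a', ha''⟩ := ha'
    refine hB3 (Bf x) hb' ((x : Fin 23 → ℤ) - a' • h2) ?_
    rw [smul_sub, hAB x, ha'']; module
  have hor : idx v = 1 ∨ idx v = 3 := by
    have hdiv : ∀ k : ℕ, k ∣ 9 → k ≠ 9 → k = 1 ∨ k = 3 := by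
      intro k hk hk9
      have hle : k ≤ 9 := Nat.le_of_dvd (by norm_num) hk
      interval_cases k <;> omega
    rw [hidx]
    exact hdiv _ hdvd9 hne9
  -- determinant transformation
  have detkey : ∀ (x y : Fin 23 → ℤ) (p q r s d : ℤ),
      p • x + q • y = h2 → r • x + s • y = v →
      d = GB x x * GB y y - GB x y * GB y x →
      -3 * GB v v = (p*s - q*r)^2 * d := by
    intro x y p q r s d hpq hrs hd
    have c11 : GB h2 h2 = p*p * GB x x + p*q * GB x y + q*p * GB y x + q*q * GB y y := by
      rw [← hpq, GB_comb]
    have c12 : GB h2 v = p*r * GB x x + p*s * GB x y + q*r * GB y x + q*s * GB y y := by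
      rw [← hpq, ← hrs, GB_comb]
    have c21 : GB v h2 = r*p * GB x x + r*q * GB x y + s*p * GB y x + s*q * GB y y := by
      rw [← hpq, ← hrs, GB_comb]
    have c22 : GB v v = r*r * GB x x + r*s * GB x y + s*r * GB y x + s*s * GB y y := by
      rw [← hrs, GB_comb]
    have hW : -3 * GB v v = GB h2 h2 * GB v v - GB h2 v * GB v h2 := by
      rw [GB_h2h2, hGB0, hvh2]; ring
    rw [hW, c11, c12, c21, c22, hd]; ring
  refine ⟨hor, ?_, ?_⟩
  · -- index 1 case
    intro h1 d hd
    obtain ⟨x, y, hK, hdet⟩ := hd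
    have hKN : (Kv v).toAddSubgroup ≤ N.toAddSubgroup := AddSubgroup.relIndex_eq_one.mp h1
    have hxN : x ∈ N := hKN (by
      show x ∈ Kv v
      rw [hK]
      exact Submodule.subset_span (Set.mem_insert _ _))
    have hyN : y ∈ N := hKN (by
      show y ∈ Kv v
      rw [hK]
      exact Submodule.subset_span (Set.mem_insert_of_mem _ rfl))
    have hh2s : h2 ∈ Submodule.span ℤ ({x, y} : Set (Fin 23 → ℤ)) := by
      rw [← hK]; exact hNK hh2N
    have hvs : v ∈ Submodule.span ℤ ({x, y} : Set (Fin 23 → ℤ)) := by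
      rw [← hK]; exact hNK hvN
    obtain ⟨p, q, hpq⟩ := Submodule.mem_span_pair.mp hh2s
    obtain ⟨r, s, hrs⟩ := Submodule.mem_span_pair.mp hvs
    rw [hN] at hxN hyN
    obtain ⟨p', q', hp'⟩ := Submodule.mem_span_pair.mp hxN
    obtain ⟨r', s', hq'⟩ := Submodule.mem_span_pair.mp hyN
    have eq1 : (p*p' + q*r') • h2 + (p*q' + q*s') • v = (1:ℤ) • h2 + (0:ℤ) • v := by
      calc (p*p' + q*r') • h2 + (p*q' + q*s') • v
          = p • (p' • h2 + q' • v) + q • (r' • h2 + s' • v) := by module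
        _ = p • x + q • y := by rw [hp', hq']
        _ = h2 := hpq
        _ = (1:ℤ) • h2 + (0:ℤ) • v := by module
    obtain ⟨E11, E12⟩ := uniq _ _ _ _ eq1
    have eq2 : (r*p' + s*r') • h2 + (r*q' + s*s') • v = (0:ℤ) • h2 + (1:ℤ) • v := by
      calc (r*p' + s*r') • h2 + (r*q' + s*s') • v
          = r • (p' • h2 + q' • v) + s • (r' • h2 + s' • v) := by module
        _ = r • x + s • y := by rw [hp', hq']
        _ = v := hrs
        _ = (0:ℤ) • h2 + (1:ℤ) • v := by module
    obtain ⟨E21, E22⟩ := uniq _ _ _ _ eq2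
    have hdet1 : (p*s - q*r) * (p'*s' - q'*r') = 1 := by
      calc (p*s - q*r) * (p'*s' - q'*r')
          = (p*p' + q*r') * (r*q' + s*s') - (p*q' + q*s') * (r*p' + s*r') := by ring
        _ = 1 := by rw [E11, E12, E21, E22]; ring
    have hDt := detkey x y p q r s d hpq hrs hdet
    have he2 : (p*s - q*r)^2 = 1 := by
      rcases Int.isUnit_iff.mp (IsUnit.of_mul_eq_one _ hdet1) with h | h <;> rw [h] <;> norm_num
    rw [he2, one_mul] at hDt
    obtain ⟨k, hk⟩ := hVeven
    constructor
    · omega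
    · omega
  · -- index 3 case
    intro h3
    obtain ⟨x₀, hx₀K, hx₀N⟩ : ∃ x₀, x₀ ∈ Kv v ∧ x₀ ∉ N := by
      by_contra hc
      push_neg at hc
      have hle : (Kv v).toAddSubgroup ≤ N.toAddSubgroup := fun z hz => hc z hz
      have h1 : idx v = 1 := AddSubgroup.relIndex_eq_one.mpr hle
      rw [h1] at h3
      exact absurd h3 (by norm_num)
    obtain ⟨a, b, hab⟩ := threeSmul x₀ hx₀K
    obtain ⟨ha3, hb3⟩ := habNotN x₀ a b hab hx₀N
    have hbV : 3 * GB v x₀ = b * GB v v := by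
      have hstep : GB v ((3:ℤ) • x₀) = GB v (a • h2 + b • v) := by rw [hab]
      rw [GB_smul_right, GB_add_right, GB_smul_right, GB_smul_right, hvh2] at hstep
      linarith
    have h3V : (3:ℤ) ∣ GB v v := by
      rcases Int.prime_three.2.2 b (GB v v) ⟨GB v x₀, hbV.symm⟩ with h | h
      · exact absurd h hb3
      · exact h
    obtain ⟨s', hVs⟩ := h3V
    have hxx : 9 * GB x₀ x₀ = a*a*(-3) + b*b*(GB v v) := by
      have hstep : GB ((3:ℤ) • x₀) ((3:ℤ) • x₀) = GB (a • h2 + b • v) (a • h2 + b • v) := by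
        rw [hab]
      rw [GB_smul_left, GB_smul_right, GB_comb, GB_h2h2, hGB0, hvh2] at hstep
      linarith
    have h3X : 3 * GB x₀ x₀ = b*b*s' - a*a := by
      rw [hVs] at hxx
      linarith
    have hs'm : s' % 3 = 1 := by
      have hcast : ((b : ZMod 3)) * (b : ZMod 3) * (s' : ZMod 3) - (a : ZMod 3) * (a : ZMod 3)
          = 0 := by
        have hc := congrArg (fun t : ℤ => ((t : ZMod 3))) h3X
        push_cast at hc
        have h30 : ((3 : ZMod 3)) = 0 := by decide
        rw [h30, zero_mul] at hc
        linear_combination -hc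
      have hA' : ((a : ZMod 3)) ≠ 0 := fun h =>
        ha3 (by exact_mod_cast (ZMod.intCast_zmod_eq_zero_iff_dvd _ 3).mp h)
      have hB' : ((b : ZMod 3)) ≠ 0 := fun h =>
        hb3 (by exact_mod_cast (ZMod.intCast_zmod_eq_zero_iff_dvd _ 3).mp h)
      have key : ∀ α β σ : ZMod 3, α ≠ 0 → β ≠ 0 → β * β * σ - α * α = 0 → σ = 1 := by decide
      have hs1 := key _ _ _ hA' hB' hcast
      have hd3 : (3:ℤ) ∣ (s' - 1) := by
        have : ((s' - 1 : ℤ) : ZMod 3) = 0 := by push_cast; rw [hs1]; ring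
        exact_mod_cast (ZMod.intCast_zmod_eq_zero_iff_dvd _ 3).mp this
      omega
    have hVe : (2:ℤ) ∣ 3 * s' := hVs ▸ hVeven
    refine ⟨by omega, ?_⟩
    intro d hd
    obtain ⟨x, y, hK, hdet⟩ := hd
    have hh2s : h2 ∈ Submodule.span ℤ ({x, y} : Set (Fin 23 → ℤ)) := by
      rw [← hK]; exact hNK hh2N
    have hvs : v ∈ Submodule.span ℤ ({x, y} : Set (Fin 23 → ℤ)) := by
      rw [← hK]; exact hNK hvN
    obtain ⟨p, q, hpq⟩ := Submodule.mem_span_pair.mp hh2s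
    obtain ⟨r, s, hrs⟩ := Submodule.mem_span_pair.mp hvs
    have hxK : x ∈ Kv v := by
      rw [hK]; exact Submodule.subset_span (Set.mem_insert _ _)
    have hyK : y ∈ Kv v := by
      rw [hK]; exact Submodule.subset_span (Set.mem_insert_of_mem _ rfl)
    obtain ⟨a₁, b₁, habx⟩ := threeSmul x hxK
    obtain ⟨a₂, b₂, haby⟩ := threeSmul y hyK
    have eqF1 : (p*a₁ + q*a₂) • h2 + (p*b₁ + q*b₂) • v = (3:ℤ) • h2 + (0:ℤ) • v := by
      calc (p*a₁ + q*a₂) • h2 + (p*b₁ + q*b₂) • v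
          = p • (a₁ • h2 + b₁ • v) + q • (a₂ • h2 + b₂ • v) := by module
        _ = p • ((3:ℤ) • x) + q • ((3:ℤ) • y) := by rw [habx, haby]
        _ = (3:ℤ) • (p • x + q • y) := by module
        _ = (3:ℤ) • h2 := by rw [hpq]
        _ = (3:ℤ) • h2 + (0:ℤ) • v := by module
    obtain ⟨F11, F12⟩ := uniq _ _ _ _ eqF1
    have eqF2 : (r*a₁ + s*a₂) • h2 + (r*b₁ + s*b₂) • v = (0:ℤ) • h2 + (3:ℤ) • v := by
      calc (r*a₁ + s*a₂) • h2 + (r*b₁ + s*b₂) • v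
          = r • (a₁ • h2 + b₁ • v) + s • (a₂ • h2 + b₂ • v) := by module
        _ = r • ((3:ℤ) • x) + s • ((3:ℤ) • y) := by rw [habx, haby]
        _ = (3:ℤ) • (r • x + s • y) := by module
        _ = (3:ℤ) • v := by rw [hrs]
        _ = (0:ℤ) • h2 + (3:ℤ) • v := by module
    obtain ⟨F21, F22⟩ := uniq _ _ _ _ eqF2
    obtain ⟨e, he⟩ : ∃ e : ℤ, e = p*s - q*r := ⟨_, rfl⟩
    obtain ⟨f, hf⟩ : ∃ f : ℤ, f = a₁*b₂ - a₂*b₁ := ⟨_, rfl⟩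
    have hef : e * f = 9 := by
      rw [he, hf]
      calc (p*s - q*r) * (a₁*b₂ - a₂*b₁)
          = (p*a₁ + q*a₂) * (r*b₁ + s*b₂) - (p*b₁ + q*b₂) * (r*a₁ + s*a₂) := by ring
        _ = 9 := by rw [F11, F12, F21, F22]; ring
    have hnot1 : ¬ (e = 1 ∨ e = -1) := by
      intro he1
      have hex : e • x = s • h2 + (-q) • v := by
        rw [he, ← hpq, ← hrs]; module
      have hey : e • y = (-r) • h2 + p • v := by
        rw [he, ← hpq, ← hrs]; module
      have hxN : x ∈ N := by
        rcases he1 with h | h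
        · rw [h, one_smul] at hex
          exact hN ▸ Submodule.mem_span_pair.mpr ⟨s, -q, hex.symm⟩
        · have hx' : x = (-s) • h2 + q • v := by
            rw [h] at hex
            calc x = (-1:ℤ) • ((-1:ℤ) • x) := by module
              _ = (-1:ℤ) • (s • h2 + (-q) • v) := by rw [hex]
              _ = (-s) • h2 + q • v := by module
          exact hN ▸ Submodule.mem_span_pair.mpr ⟨-s, q, hx'.symm⟩
      have hyN : y ∈ N := by
        rcases he1 with h | h
        · rw [h, one_smul] at hey
          exact hN ▸ Submodule.mem_span_pair.mpr ⟨-r, p, hey.symm⟩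
        · have hy' : y = r • h2 + (-p) • v := by
            rw [h] at hey
            calc y = (-1:ℤ) • ((-1:ℤ) • y) := by module
              _ = (-1:ℤ) • ((-r) • h2 + p • v) := by rw [hey]
              _ = r • h2 + (-p) • v := by module
          exact hN ▸ Submodule.mem_span_pair.mpr ⟨r, -p, hy'.symm⟩
      have hsp : Submodule.span ℤ ({x, y} : Set (Fin 23 → ℤ)) ≤ N := by
        rw [Submodule.span_le]
        rintro w hw
        rcases hw with rfl | hw
        · exact hxN
        · rw [Set.mem_singleton_iff] at hw
          subst hw
          exact hyN
      have hle : (Kv v).toAddSubgroup ≤ N.toAddSubgroup := by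
        intro z hz
        refine hsp ?_
        rw [← hK]
        exact hz
      have h1 : idx v = 1 := AddSubgroup.relIndex_eq_one.mpr hle
      rw [h1] at h3
      exact absurd h3 (by norm_num)
    have hnotf1 : ¬ (f = 1 ∨ f = -1) := by
      intro hf1
      have hfh : f • h2 = (3:ℤ) • (b₂ • x + (-b₁) • y) := by
        calc f • h2 = b₂ • (a₁ • h2 + b₁ • v) + (-b₁) • (a₂ • h2 + b₂ • v) := by
              rw [hf]; module
          _ = b₂ • ((3:ℤ) • x) + (-b₁) • ((3:ℤ) • y) := by rw [habx, haby]
          _ = (3:ℤ) • (b₂ • x + (-b₁) • y) := by module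
      have h22 := congrFun hfh 22
      simp only [Pi.smul_apply, smul_eq_mul, h2_22, mul_one] at h22
      rcases hf1 with h | h <;> rw [h] at h22 <;> omega
    have heb : e ≤ 9 := Int.le_of_dvd (by norm_num) ⟨f, hef.symm⟩
    have helb : -9 ≤ e := by
      have hne : -e ≤ 9 := Int.le_of_dvd (by norm_num) ((neg_dvd).mpr ⟨f, hef.symm⟩)
      omega
    have he3 : e = 3 ∨ e = -3 := by
      interval_cases e <;> omega
    have hDt := detkey x y p q r s d hpq hrs hdet
    rw [← he] at hDt
    have he2 : e^2 = 9 := by rcases he3 with h | h <;> rw [h] <;> norm_num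
    rw [he2] at hDt
    rw [hVs] at hDt
    have hds : d = -s' := by linarith
    constructor
    · rw [hVs, hds]; omega
    · omega
end

section
/- Let d be a positive integer with d ≡ 0 (mod 6) and set v_d := e₁ − (d/6)f₁ ∈ Γ̄. Then there exists a ℤ-linear isometry g : Γ̄ → Γ̄ with g(h²) = h² and g(v_d) = −v_d. (Consequently the stabilizer of v_d has index two in the group of isometries of Γ̄ fixing h² and preserving {±v_d}.) -/
open scoped BigOperators

/-- For `d ≡ 0 (mod 6)`, the vector `v_d = e₁ - (d/6) f₁ ∈ Γ̄`. -/
def vdC0 (d : ℤ) : Fin 23 → ℤ :=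
  Pi.single 16 1 - (d / 6) • Pi.single 17 1


def sgnC (i : Fin 23) : ℤ := if i = 16 ∨ i = 17 then -1 else 1

lemma sgnC_mul_self (i : Fin 23) : sgnC i * sgnC i = 1 := by
  unfold sgnC; split_ifs <;> norm_num

lemma gram_sgn : ∀ i j : Fin 23, gramC i j * sgnC i * sgnC j = gramC i j := by decide

/-- The isometry negating the first hyperbolic plane. -/
def negU : (Fin 23 → ℤ) ≃ₗ[ℤ] (Fin 23 → ℤ) where
  toFun x := fun i => sgnC i * x i
  invFun x := fun i => sgnC i * x i
  left_inv x := funext fun i => by show sgnC i * (sgnC i * x i) = x i; rw [← mul_assoc, sgnC_mul_self, one_mul]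
  right_inv x := funext fun i => by show sgnC i * (sgnC i * x i) = x i; rw [← mul_assoc, sgnC_mul_self, one_mul]
  map_add' x y := funext fun i => by simp [mul_add]
  map_smul' c x := funext fun i => by simp [mul_comm, mul_left_comm]

lemma negU_apply (x : Fin 23 → ℤ) (i : Fin 23) : negU x i = sgnC i * x i := rfl

lemma negU_isom : IsIsomC negU := by
  intro x y
  unfold GB
  refine Finset.sum_congr rfl fun i _ => Finset.sum_congr rfl fun j _ => ?_
  rw [negU_apply, negU_apply]
  calc gramC i j * (sgnC i * x i) * (sgnC j * y j)
      = gramC i j * sgnC i * sgnC j * x i * y j := by ring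
    _ = gramC i j * x i * y j := by rw [gram_sgn]

/-- For a positive integer `d ≡ 0 (mod 6)` and `v_d = e₁ - (d/6) f₁`, there is an
isometry of `Γ̄` fixing `h²` and mapping `v_d` to `-v_d`. -/
theorem stmt_4 (d : ℤ) (hd : 0 < d) (h6 : d % 6 = 0) :
    ∃ g : (Fin 23 → ℤ) ≃ₗ[ℤ] (Fin 23 → ℤ), IsIsomC g ∧ g h2 = h2 ∧
      g (vdC0 d) = -(vdC0 d) := by
  refine ⟨negU, negU_isom, ?_, ?_⟩
  · funext i
    rw [negU_apply]
    fin_cases i <;> simp [h2, sgnC, Pi.single_apply]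
  · funext i
    rw [negU_apply]
    fin_cases i <;> simp [vdC0, sgnC, Pi.single_apply]
end

section
/- Let d be a positive integer with d ≡ 2 (mod 6) and set v_d := 3e₁ − ((d−2)/2)f₁ + (0,…,0,1,−2,1) ∈ Γ̄ (last three coordinates 1,−2,1, so v_d ∈ Γ). Then there is no ℤ-linear isometry g : Γ̄ → Γ̄ with g(h²) = h² and g(v_d) = −v_d; equivalently, every isometry of Γ̄ fixing h² and mapping v_d to ±v_d fixes v_d. -/
open scoped BigOperators

/-- For `d ≡ 2 (mod 6)`, the vector `v_d = 3e₁ - ((d-2)/2) f₁ + (0,…,0,1,-2,1) ∈ Γ̄`. -/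
def vdC2 (d : ℤ) : Fin 23 → ℤ :=
  (3 : ℤ) • Pi.single 16 1 - ((d - 2) / 2) • Pi.single 17 1 +
    (Pi.single 20 1 - (2 : ℤ) • Pi.single 21 1 + Pi.single 22 1)

lemma gram16' (j : Fin 23) : gramC 16 j = if j = 17 then 1 else 0 := by
  unfold gramC
  by_cases h : j = (17 : Fin 23) <;>
    simp_all [show ((16 : Fin 23) : ℕ) = 16 from rfl, show ((17 : Fin 23) : ℕ) = 17 from rfl,
      Fin.ext_iff] <;> omega

lemma gram17' (j : Fin 23) : gramC 17 j = if j = 16 then 1 else 0 := by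
  unfold gramC
  by_cases h : j = (16 : Fin 23) <;>
    simp_all [show ((17 : Fin 23) : ℕ) = 17 from rfl, show ((16 : Fin 23) : ℕ) = 16 from rfl,
      Fin.ext_iff] <;> omega

lemma gram20' (j : Fin 23) : gramC 20 j = if j = 20 then -1 else 0 := by
  unfold gramC
  by_cases h : j = (20 : Fin 23) <;>
    simp_all [show ((20 : Fin 23) : ℕ) = 20 from rfl, Fin.ext_iff] <;> omega

lemma gram21' (j : Fin 23) : gramC 21 j = if j = 21 then -1 else 0 := by
  unfold gramC
  by_cases h : j = (21 : Fin 23) <;>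
    simp_all [show ((21 : Fin 23) : ℕ) = 21 from rfl, Fin.ext_iff] <;> omega

lemma gram22' (j : Fin 23) : gramC 22 j = if j = 22 then -1 else 0 := by
  unfold gramC
  by_cases h : j = (22 : Fin 23) <;>
    simp_all [show ((22 : Fin 23) : ℕ) = 22 from rfl, Fin.ext_iff] <;> omega

lemma GB_single_left (i : Fin 23) (c : ℤ) (y : Fin 23 → ℤ) :
    GB (Pi.single i c) y = c * ∑ j, gramC i j * y j := by
  unfold GB
  rw [Finset.sum_eq_single i]
  · rw [Finset.mul_sum]
    refine Finset.sum_congr rfl fun j _ => ?_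
    rw [Pi.single_eq_same]; ring
  · intro b _ hb
    apply Finset.sum_eq_zero; intro j _
    rw [Pi.single_eq_of_ne hb]; ring
  · intro h; exact absurd (Finset.mem_univ i) h

lemma GB_neg_left (x y : Fin 23 → ℤ) : GB (-x) y = - GB x y := by
  simpa using GB_smul_left (-1) x y

lemma GB_sub_left (x y z : Fin 23 → ℤ) : GB (x - y) z = GB x z - GB y z := by
  rw [sub_eq_add_neg, GB_add_left, GB_neg_left]; ring

lemma GB_h2_left (y : Fin 23 → ℤ) : GB h2 y = -(y 20) - y 21 - y 22 := by
  unfold h2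
  rw [GB_add_left, GB_add_left, GB_single_left, GB_single_left, GB_single_left]
  simp [gram20', gram21', gram22', ite_mul, Finset.sum_ite_eq']
  ring

lemma GB_vd_left (d : ℤ) (y : Fin 23 → ℤ) :
    GB (vdC2 d) y = 3 * y 17 - ((d - 2) / 2) * y 16 + (-(y 20) + 2 * y 21 - y 22) := by
  unfold vdC2
  rw [GB_add_left, GB_sub_left, GB_smul_left, GB_smul_left, GB_add_left, GB_sub_left,
    GB_smul_left, GB_single_left, GB_single_left, GB_single_left, GB_single_left,
    GB_single_left]
  simp [gram16', gram17', gram20', gram21', gram22', ite_mul, Finset.sum_ite_eq']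
  ring

/-- For a positive integer `d ≡ 2 (mod 6)` and
`v_d = 3e₁ - ((d-2)/2) f₁ + (0,…,0,1,-2,1)`, no isometry of `Γ̄` fixes `h²` and maps
`v_d` to `-v_d`. -/
theorem stmt_5 (d : ℤ) (hd : 0 < d) (h6 : d % 6 = 2) :
    ¬ ∃ g : (Fin 23 → ℤ) ≃ₗ[ℤ] (Fin 23 → ℤ), IsIsomC g ∧ g h2 = h2 ∧
      g (vdC2 d) = -(vdC2 d) := by
  rintro ⟨g, hg, hgh, hgv⟩
  set x : Fin 23 → ℤ := Pi.single (20 : Fin 23) (-1) with hx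
  have hx20 : x 20 = -1 := Pi.single_eq_same _ _
  have hx21 : x 21 = 0 := Pi.single_eq_of_ne (by decide) _
  have hx22 : x 22 = 0 := Pi.single_eq_of_ne (by decide) _
  have hx17 : x 17 = 0 := Pi.single_eq_of_ne (by decide) _
  have hx16 : x 16 = 0 := Pi.single_eq_of_ne (by decide) _
  have a1 : GB h2 x = 1 := by rw [GB_h2_left, hx20, hx21, hx22]; ring
  have a2 : GB (vdC2 d) x = 1 := by rw [GB_vd_left, hx16, hx17, hx20, hx21, hx22]; ring
  have b1 : GB h2 (g x) = 1 := by
    calc GB h2 (g x) = GB (g h2) (g x) := by rw [hgh]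
    _ = GB h2 x := hg h2 x
    _ = 1 := a1
  have b2 : GB (vdC2 d) (g x) = -1 := by
    have h' := hg (vdC2 d) x
    rw [hgv, GB_neg_left, a2] at h'
    linarith
  obtain ⟨q, hq⟩ : ∃ q : ℤ, (d - 2) / 2 = 3 * q := by
    obtain ⟨q, hq6⟩ : (6 : ℤ) ∣ d - 2 := by omega
    exact ⟨q, by omega⟩
  have key : (3 : ℤ) ∣ (GB (vdC2 d) (g x) - GB h2 (g x)) := by
    rw [GB_vd_left, GB_h2_left, hq]
    exact ⟨g x 17 - q * g x 16 + g x 21, by ring⟩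
  rw [b1, b2] at key
  omega
end

section
/- Let d be a positive integer with d ≡ 0 or 2 (mod 6). Then there exist a nonzero integer n and x, y ∈ L_d with (x.x) = (y.y) = 0 and (x.y) = n (an isometric embedding of U(n) into L_d) if and only if there exist integers a, b with 2(a² − ab + b²) = d (i.e. d is represented by the lattice A₂). -/
open scoped BigOperators

noncomputable section

/-- The Gram matrix of the Mukai lattice `Λ̃ = E₈(-1)² ⊕ U₁ ⊕ U₂ ⊕ U₃ ⊕ U₄` on `ℤ²⁴`,
where the last hyperbolic summand `U₄` carries the sign-changed pairing `(e₄.f₄) = -1`. -/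
def gramM : Fin 24 → Fin 24 → ℤ := fun i j =>
  if i.val < 8 ∧ j.val < 8 then
    E8M ⟨i.val % 8, Nat.mod_lt _ (by norm_num)⟩ ⟨j.val % 8, Nat.mod_lt _ (by norm_num)⟩
  else if 8 ≤ i.val ∧ i.val < 16 ∧ 8 ≤ j.val ∧ j.val < 16 then
    E8M ⟨(i.val - 8) % 8, Nat.mod_lt _ (by norm_num)⟩ ⟨(j.val - 8) % 8, Nat.mod_lt _ (by norm_num)⟩
  else if (i.val = 16 ∧ j.val = 17) ∨ (i.val = 17 ∧ j.val = 16) ∨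
      (i.val = 18 ∧ j.val = 19) ∨ (i.val = 19 ∧ j.val = 18) ∨
      (i.val = 20 ∧ j.val = 21) ∨ (i.val = 21 ∧ j.val = 20) then 1
  else if (i.val = 22 ∧ j.val = 23) ∨ (i.val = 23 ∧ j.val = 22) then -1
  else 0

/-- The bilinear (Mukai) form of the lattice `Λ̃`. -/
def MB (x y : Fin 24 → ℤ) : ℤ := ∑ i, ∑ j, gramM i j * x i * y j

/-- `λ₁ = e₄ - f₄`. -/
def l1 : Fin 24 → ℤ := Pi.single 22 1 - Pi.single 23 1

/-- `λ₂ = e₃ + f₃ + f₄`. -/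
def l2 : Fin 24 → ℤ := Pi.single 20 1 + Pi.single 21 1 + Pi.single 23 1

/-- `μ₁ = e₃ - f₃`. -/
def m1 : Fin 24 → ℤ := Pi.single 20 1 - Pi.single 21 1

/-- `μ₂ = -e₃ - e₄ - f₄`. -/
def m2 : Fin 24 → ℤ := -(Pi.single 20 1) - Pi.single 22 1 - Pi.single 23 1

lemma MB_add_left (x y z : Fin 24 → ℤ) : MB (x + y) z = MB x z + MB y z := by
  simp only [MB, Pi.add_apply, ← Finset.sum_add_distrib]
  refine Finset.sum_congr rfl fun i _ => Finset.sum_congr rfl fun j _ => ?_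
  ring

lemma MB_smul_left (c : ℤ) (x y : Fin 24 → ℤ) : MB (c • x) y = c * MB x y := by
  simp only [MB, Finset.mul_sum]
  refine Finset.sum_congr rfl fun i _ => Finset.sum_congr rfl fun j _ => ?_
  simp only [Pi.smul_apply, smul_eq_mul]; ring

/-- Isometries of the Mukai lattice `Λ̃`. -/
def IsIsomM (g : (Fin 24 → ℤ) ≃ₗ[ℤ] (Fin 24 → ℤ)) : Prop := ∀ x y, MB (g x) (g y) = MB x y

end
/-- The Noether–Lefschetz vector `v_d ∈ Λ̃`: for `d ≡ 0 (mod 6)` it is `e₁ - (d/6) f₁`, and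
for `d ≡ 2 (mod 6)` it is `3(e₁ - ((d-2)/6) f₁) + μ₁ - μ₂`. -/
def vdM (d : ℤ) : Fin 24 → ℤ :=
  if d % 6 = 0 then Pi.single 16 1 - (d / 6) • Pi.single 17 1
  else (3 : ℤ) • (Pi.single 16 1 - ((d - 2) / 6) • Pi.single 17 1) + m1 - m2

/-- `L_d`, the saturation of `ℤλ₁ + ℤλ₂ + ℤv_d` in `Λ̃`. -/
def LdSub (d : ℤ) : Submodule ℤ (Fin 24 → ℤ) :=
  sat (Submodule.span ℤ ({l1, l2, vdM d} : Set (Fin 24 → ℤ)))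

structure Eis where
  re : ℤ
  im : ℤ

namespace Eis

@[ext] theorem ext' : ∀ {z w : Eis}, z.re = w.re → z.im = w.im → z = w
  | ⟨_, _⟩, ⟨_, _⟩, rfl, rfl => rfl

instance : Zero Eis := ⟨⟨0, 0⟩⟩
instance : One Eis := ⟨⟨1, 0⟩⟩
instance : Add Eis := ⟨fun z w => ⟨z.re + w.re, z.im + w.im⟩⟩
instance : Neg Eis := ⟨fun z => ⟨-z.re, -z.im⟩⟩
instance : Sub Eis := ⟨fun z w => ⟨z.re - w.re, z.im - w.im⟩⟩
instance : Mul Eis :=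
  ⟨fun z w => ⟨z.re * w.re - z.im * w.im, z.re * w.im + z.im * w.re - z.im * w.im⟩⟩

@[simp] lemma zero_re : (0 : Eis).re = 0 := rfl
@[simp] lemma zero_im : (0 : Eis).im = 0 := rfl
@[simp] lemma one_re : (1 : Eis).re = 1 := rfl
@[simp] lemma one_im : (1 : Eis).im = 0 := rfl
@[simp] lemma add_re (z w : Eis) : (z + w).re = z.re + w.re := rfl
@[simp] lemma add_im (z w : Eis) : (z + w).im = z.im + w.im := rfl
@[simp] lemma neg_re (z : Eis) : (-z).re = -z.re := rfl
@[simp] lemma neg_im (z : Eis) : (-z).im = -z.im := rfl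
@[simp] lemma sub_re (z w : Eis) : (z - w).re = z.re - w.re := rfl
@[simp] lemma sub_im (z w : Eis) : (z - w).im = z.im - w.im := rfl
@[simp] lemma mul_re (z w : Eis) : (z * w).re = z.re * w.re - z.im * w.im := rfl
@[simp] lemma mul_im (z w : Eis) : (z * w).im = z.re * w.im + z.im * w.re - z.im * w.im := rfl

instance commRing : CommRing Eis := by
  refine
  { zero := 0
    one := 1
    add := (· + ·)
    neg := (-·)
    sub := (· - ·)
    mul := (· * ·)
    nsmul := nsmulRec
    zsmul := zsmulRec
    npow := npowRec
    natCast := fun n => ⟨n, 0⟩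
    intCast := fun n => ⟨n, 0⟩
    natCast_zero := rfl
    natCast_succ := fun n => by ext <;> simp <;> rfl
    intCast_ofNat := fun n => by ext <;> rfl
    intCast_negSucc := fun n => by
      ext
      · show Int.negSucc n = -((n + 1 : ℕ) : ℤ); simp [Int.negSucc_eq]
      · show (0 : ℤ) = -(0 : ℤ); simp
    add_assoc := ?_
    zero_add := ?_
    add_zero := ?_
    add_comm := ?_
    neg_add_cancel := ?_
    sub_eq_add_neg := ?_
    left_distrib := ?_
    right_distrib := ?_
    zero_mul := ?_
    mul_zero := ?_
    mul_assoc := ?_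
    one_mul := ?_
    mul_one := ?_
    mul_comm := ?_ } <;>
  intros <;> ext <;> simp <;> ring

@[simp] lemma natCast_re (n : ℕ) : (n : Eis).re = n := rfl
@[simp] lemma natCast_im (n : ℕ) : (n : Eis).im = 0 := rfl
@[simp] lemma intCast_re (n : ℤ) : (n : Eis).re = n := rfl
@[simp] lemma intCast_im (n : ℤ) : (n : Eis).im = 0 := rfl

def conj (z : Eis) : Eis := ⟨z.re - z.im, -z.im⟩

def norm (z : Eis) : ℤ := z.re ^ 2 - z.re * z.im + z.im ^ 2

@[simp] lemma conj_re (z : Eis) : (conj z).re = z.re - z.im := rfl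
@[simp] lemma conj_im (z : Eis) : (conj z).im = -z.im := rfl

lemma norm_mul (z w : Eis) : norm (z * w) = norm z * norm w := by
  simp [norm]; ring

lemma norm_conj (z : Eis) : norm (conj z) = norm z := by simp [norm]; ring

lemma mul_conj (z : Eis) : z * conj z = ⟨norm z, 0⟩ := by
  ext <;> simp [norm] <;> ring

lemma intCast_val (n : ℤ) : (n : Eis) = ⟨n, 0⟩ := rfl

lemma norm_nonneg (z : Eis) : 0 ≤ norm z := by
  have := sq_nonneg (2 * z.re - z.im)
  have := sq_nonneg z.im
  simp only [norm]; nlinarith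

lemma norm_eq_zero_iff {z : Eis} : norm z = 0 ↔ z = 0 := by
  constructor
  · intro h
    have h1 : z.im = 0 := by
      have := sq_nonneg (2 * z.re - z.im); simp only [norm] at h; nlinarith [sq_nonneg z.im]
    have h2 : z.re = 0 := by
      simp only [norm, h1] at h; nlinarith
    ext <;> simp [h1, h2]
  · rintro rfl; simp [norm]

instance : Nontrivial Eis :=
  ⟨⟨0, 1, fun h => by simpa using congrArg Eis.re h⟩⟩

instance : NoZeroDivisors Eis where
  eq_zero_or_eq_zero_of_mul_eq_zero {z w} h := by
    have : norm z * norm w = 0 := by rw [← norm_mul, h]; simp [norm]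
    rcases mul_eq_zero.1 this with h' | h'
    · exact Or.inl (norm_eq_zero_iff.1 h')
    · exact Or.inr (norm_eq_zero_iff.1 h')

instance : IsDomain Eis := NoZeroDivisors.to_isDomain _

lemma norm_pos {z : Eis} (hz : z ≠ 0) : 0 < norm z :=
  lt_of_le_of_ne (norm_nonneg z) fun h => hz (norm_eq_zero_iff.1 h.symm)

instance : Div Eis :=
  ⟨fun x y =>
    let n := norm y
    let z := x * conj y
    ⟨round ((z.re : ℚ) / n), round ((z.im : ℚ) / n)⟩⟩

lemma div_def (x y : Eis) : x / y =
    ⟨round (((x * conj y).re : ℚ) / (norm y : ℚ)), round (((x * conj y).im : ℚ) / (norm y : ℚ))⟩ :=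
  rfl

instance : Mod Eis := ⟨fun x y => x - y * (x / y)⟩

lemma mod_def (x y : Eis) : x % y = x - y * (x / y) := rfl

lemma key_round {a n : ℤ} (hn : 0 < n) : 2 * |a - round ((a : ℚ) / n) * n| ≤ n := by
  have hn' : (0 : ℚ) < (n : ℚ) := by exact_mod_cast hn
  have h := abs_sub_round ((a : ℚ) / n)
  have h2 : |(a : ℚ) - round ((a : ℚ) / n) * n| ≤ (n : ℚ) / 2 := by
    have : (a : ℚ) - round ((a : ℚ) / n) * n = ((a : ℚ) / n - round ((a : ℚ) / n)) * n := by
      field_simp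
    rw [this, abs_mul, abs_of_pos hn']
    calc |(a : ℚ) / n - round ((a : ℚ) / n)| * n ≤ (1 / 2) * n := by
          apply mul_le_mul_of_nonneg_right h (le_of_lt hn')
      _ = (n : ℚ) / 2 := by ring
  have : (2 : ℚ) * |(a : ℚ) - (round ((a : ℚ) / n) : ℚ) * n| ≤ (n : ℚ) := by linarith
  exact_mod_cast (by push_cast; exact this : (2 : ℚ) * |((a - round ((a : ℚ) / n) * n : ℤ) : ℚ)| ≤ (n : ℚ))

lemma norm_mod_lt (x : Eis) {y : Eis} (hy : y ≠ 0) : norm (x % y) < norm y := by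
  have hn : 0 < norm y := norm_pos hy
  set n := norm y with hn_def
  set z := x * conj y with hz_def
  set q := x / y with hq_def
  set A := z.re - q.re * n with hA
  set B := z.im - q.im * n with hB
  have e0 : y * conj y = (⟨n, 0⟩ : Eis) := mul_conj y
  have key1 : (x % y) * conj y = ⟨A, B⟩ := by
    have e1 : (x % y) * conj y = z - q * (y * conj y) := by rw [mod_def, hz_def, hq_def]; ring
    rw [e1, e0]; ext <;> simp [hA, hB] <;> ring
  have hA2 : 2 * |A| ≤ n := by
    rw [hA, hq_def, div_def]; exact key_round hn
  have hB2 : 2 * |B| ≤ n := by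
    rw [hB, hq_def, div_def]; exact key_round hn
  have key3 : norm (x % y) * n = A ^ 2 - A * B + B ^ 2 := by
    have := norm_mul (x % y) (conj y)
    rw [key1, norm_conj] at this
    rw [← hn_def] at this
    rw [← this]; simp [norm]
  have key4 : A ^ 2 - A * B + B ^ 2 < n * n := by
    nlinarith [abs_nonneg A, abs_nonneg B, sq_abs A, sq_abs B, neg_abs_le (A * B),
      abs_mul A B, mul_le_mul hA2 hB2 (by positivity) (by positivity)]
  have : norm (x % y) * n < n * n := by rw [key3]; exact key4
  exact lt_of_mul_lt_mul_right this (le_of_lt hn)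

lemma natAbs_norm_mod_lt (x : Eis) {y : Eis} (hy : y ≠ 0) :
    (norm (x % y)).natAbs < (norm y).natAbs := by
  have := norm_mod_lt x hy
  have h1 := norm_nonneg (x % y)
  omega

instance : EuclideanDomain Eis :=
  { Eis.commRing, (inferInstance : Nontrivial Eis) with
    quotient := (· / ·)
    remainder := (· % ·)
    quotient_zero := fun x => by
      ext <;> simp [div_def, norm] <;> rfl
    quotient_mul_add_remainder_eq := fun a b => by
      show b * (a / b) + (a - b * (a / b)) = a; ring
    r := _
    r_wellFounded := (measure (Int.natAbs ∘ norm)).wf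
    remainder_lt := fun a b hb => natAbs_norm_mod_lt a hb
    mul_left_not_lt := fun a b hb0 => by
      have h : (norm a).natAbs ≤ (norm (a * b)).natAbs := by
        rw [norm_mul, Int.natAbs_mul]
        have := norm_pos hb0
        exact Nat.le_mul_of_pos_right _ (by omega)
      exact not_lt_of_ge h
    }

end Eis

namespace Eis

lemma isUnit_iff_norm {z : Eis} : IsUnit z ↔ norm z = 1 := by
  constructor
  · rintro ⟨u, rfl⟩
    have h : norm (u : Eis) * norm ((u⁻¹ : Eisˣ) : Eis) = 1 := by
      rw [← norm_mul]
      simp [norm]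
    have h1 := norm_nonneg (u : Eis)
    have h2 := norm_nonneg ((u⁻¹ : Eisˣ) : Eis)
    exact Int.eq_one_of_mul_eq_one_right h1 h
  · intro h
    exact IsUnit.of_mul_eq_one (conj z) (by rw [mul_conj, h]; rfl)

lemma irreducible_of_norm_prime {z : Eis} (hz : (norm z).natAbs.Prime) : Irreducible z := by
  constructor
  · intro hu
    rw [isUnit_iff_norm.1 hu] at hz
    norm_num at hz
  · intro a b hab
    by_contra hcon
    push_neg at hcon
    obtain ⟨ha, hb⟩ := hcon
    have h1 : (norm a).natAbs ≠ 1 := fun h => ha (isUnit_iff_norm.2 (by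
      have := norm_nonneg a; omega))
    have h2 : (norm b).natAbs ≠ 1 := fun h => hb (isUnit_iff_norm.2 (by
      have := norm_nonneg b; omega))
    have : (norm a).natAbs * (norm b).natAbs = (norm z).natAbs := by
      rw [← Int.natAbs_mul, ← norm_mul, ← hab]
    rcases hz.eq_one_or_self_of_dvd ((norm a).natAbs) ⟨(norm b).natAbs, this.symm⟩ with h | h
    · exact h1 h
    · -- natAbs norm a = natAbs norm z, so natAbs norm b = 1
      have hz0 : (norm z).natAbs ≠ 0 := hz.ne_zero
      have : (norm z).natAbs * (norm b).natAbs = (norm z).natAbs * 1 := by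
        rw [← h] at this ⊢; omega
      exact h2 (Nat.eq_of_mul_eq_mul_left (Nat.pos_of_ne_zero hz0) this)

lemma intCast_dvd_iff (k : ℤ) (z : Eis) : (k : Eis) ∣ z ↔ k ∣ z.re ∧ k ∣ z.im := by
  constructor
  · rintro ⟨w, rfl⟩
    constructor
    · exact ⟨w.re, by simp⟩
    · exact ⟨w.im, by simp⟩
  · rintro ⟨⟨c, hc⟩, ⟨d, hd⟩⟩
    exact ⟨⟨c, d⟩, by ext <;> simp [hc, hd]⟩

/-- If `p = 3` or `p ≡ 1 (mod 3)` is a prime dividing `u² - uv + v²`,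
then we can divide that value by `p` within the quadratic form. -/
lemma step_split (p : ℕ) (hp : p.Prime) (h3 : p = 3 ∨ p % 3 = 1) (u v : ℤ)
    (hdvd : (p : ℤ) ∣ u ^ 2 - u * v + v ^ 2) :
    ∃ a b : ℤ, u ^ 2 - u * v + v ^ 2 = (p : ℤ) * (a ^ 2 - a * b + b ^ 2) := by
  haveI : Fact p.Prime := ⟨hp⟩
  -- there is c with p ∣ c² - c + 1
  obtain ⟨c, hc⟩ : ∃ c : ℤ, (p : ℤ) ∣ c ^ 2 - c + 1 := by
    rcases h3 with rfl | h1
    · exact ⟨2, by norm_num⟩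
    · have hcard : 3 ∣ Fintype.card (ZMod p)ˣ := by
        rw [ZMod.card_units_eq_totient, Nat.totient_prime hp]
        omega
      obtain ⟨x, hx⟩ := exists_prime_orderOf_dvd_card 3 hcard
      have hx3 : x ^ 3 = 1 := by rw [← hx]; exact pow_orderOf_eq_one x
      have hx1 : x ≠ 1 := by
        intro h; rw [h, orderOf_one] at hx; norm_num at hx
      set ξ : ZMod p := (x : ZMod p) with hξ
      have hξ3 : ξ ^ 3 = 1 := by
        rw [hξ, ← Units.val_pow_eq_pow_val, hx3, Units.val_one]
      have hξ1 : ξ ≠ 1 := fun h => hx1 (Units.ext h)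
      have hfac : (ξ - 1) * (ξ ^ 2 + ξ + 1) = 0 := by
        have : ξ ^ 3 - 1 = 0 := by rw [hξ3]; ring
        calc (ξ - 1) * (ξ ^ 2 + ξ + 1) = ξ ^ 3 - 1 := by ring
          _ = 0 := this
      have hsum : ξ ^ 2 + ξ + 1 = 0 := by
        rcases mul_eq_zero.1 hfac with h | h
        · exact absurd (by linear_combination h) hξ1
        · exact h
      refine ⟨-(ξ.val : ℤ), ?_⟩
      rw [← ZMod.intCast_zmod_eq_zero_iff_dvd]
      push_cast
      rw [ZMod.natCast_val, ZMod.cast_id]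
      linear_combination hsum
  -- (p : Eis) is not irreducible
  have hpnu : ¬ IsUnit (p : Eis) := by
    rw [show ((p : ℕ) : Eis) = ((p : ℤ) : Eis) by push_cast; rfl]
    rw [isUnit_iff_norm]
    rw [intCast_val]
    simp only [norm]
    have : 2 ≤ p := hp.two_le
    nlinarith [sq_nonneg (p : ℤ)]
  have hnormp : norm ((p : ℕ) : Eis) = (p : ℤ) ^ 2 := by
    rw [show ((p : ℕ) : Eis) = ((p : ℤ) : Eis) by push_cast; rfl, intCast_val]
    simp [norm]
  have hni : ¬ Irreducible (p : Eis) := by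
    intro hirr
    have hpr : Prime (p : Eis) := (irreducible_iff_prime).1 hirr
    have hdvd2 : (p : Eis) ∣ (⟨c, 1⟩ : Eis) * conj ⟨c, 1⟩ := by
      rw [mul_conj]
      have : norm ⟨c, 1⟩ = c ^ 2 - c + 1 := by simp [norm]
      rw [this]
      obtain ⟨m, hm⟩ := hc
      refine ⟨(m : Eis), ?_⟩
      rw [show ((p : ℕ) : Eis) = ((p : ℤ) : Eis) by push_cast; rfl]
      rw [intCast_val, intCast_val, hm]
      ext <;> simp
    have h2le := hp.two_le
    rcases hpr.2.2 _ _ hdvd2 with h | h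
    · rw [show ((p : ℕ) : Eis) = ((p : ℤ) : Eis) by push_cast; rfl, intCast_dvd_iff] at h
      have h1 : (p : ℤ) ∣ (1 : ℤ) := h.2
      have := Int.le_of_dvd one_pos h1
      omega
    · rw [show ((p : ℕ) : Eis) = ((p : ℤ) : Eis) by push_cast; rfl, intCast_dvd_iff] at h
      have h1 : (p : ℤ) ∣ (-1 : ℤ) := h.2
      have := Int.le_of_dvd one_pos (dvd_neg.mp h1)
      omega
  -- extract a factor of norm p
  obtain ⟨α, β, hfac, hαu, hβu⟩ : ∃ α β : Eis, (p : Eis) = α * β ∧ ¬IsUnit α ∧ ¬IsUnit β := by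
    rw [irreducible_iff] at hni
    push_neg at hni
    obtain ⟨α, β, h1, h2⟩ := hni hpnu
    exact ⟨α, β, h1, h2.1, h2.2⟩
  have hnn : (norm α).natAbs * (norm β).natAbs = p ^ 2 := by
    have : norm α * norm β = (p : ℤ) ^ 2 := by rw [← norm_mul, ← hfac, hnormp]
    have h := congrArg Int.natAbs this
    rwa [Int.natAbs_mul, Int.natAbs_pow, Int.natAbs_natCast] at h
  have hα1 : (norm α).natAbs ≠ 1 := by
    intro h
    refine hαu (isUnit_iff_norm.2 ?_)
    have h1 := norm_nonneg α
    omega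
  have hβ1 : (norm β).natAbs ≠ 1 := by
    intro h
    refine hβu (isUnit_iff_norm.2 ?_)
    have h1 := norm_nonneg β
    omega
  have hαp : (norm α).natAbs = p := by
    have hd : (norm α).natAbs ∣ p ^ 2 := ⟨(norm β).natAbs, hnn.symm⟩
    obtain ⟨i, hi, he⟩ := (Nat.dvd_prime_pow hp).1 hd
    have hppos : 0 < p := hp.pos
    interval_cases i
    · simp at he; exact absurd he hα1
    · simpa using he
    · exfalso
      rw [he] at hnn
      have hp2 : 0 < p ^ 2 := by positivity
      have : (norm β).natAbs = 1 :=
        Nat.eq_of_mul_eq_mul_left hp2 (by linarith [hnn] : p ^ 2 * (norm β).natAbs = p ^ 2 * 1)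
      exact hβ1 this
  have hαprime : Prime α :=
    (irreducible_iff_prime).1 (irreducible_of_norm_prime (by rw [hαp]; exact hp))
  -- α divides z * conj z where z = ⟨u, v⟩
  set z : Eis := ⟨u, v⟩ with hz
  have hnz : norm z = u ^ 2 - u * v + v ^ 2 := by simp [norm, hz]
  have hαdvd : α ∣ z * conj z := by
    have h1 : (p : Eis) ∣ z * conj z := by
      rw [mul_conj, hnz]
      obtain ⟨m, hm⟩ := hdvd
      refine ⟨(m : Eis), ?_⟩
      rw [show ((p : ℕ) : Eis) = ((p : ℤ) : Eis) by push_cast; rfl]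
      rw [intCast_val, intCast_val, hm]
      ext <;> simp
    exact dvd_trans (Dvd.intro β hfac.symm) h1
  have hnormα : norm α = (p : ℤ) := by
    have := norm_nonneg α
    omega
  rcases hαprime.2.2 _ _ hαdvd with h | h
  · obtain ⟨w, hw⟩ := h
    refine ⟨w.re, w.im, ?_⟩
    have : norm z = norm α * norm w := by rw [hw, norm_mul]
    rw [hnz, hnormα] at this
    rw [this]
    simp [norm]
  · obtain ⟨w, hw⟩ := h
    refine ⟨w.re, w.im, ?_⟩
    have : norm (conj z) = norm α * norm w := by rw [hw, norm_mul]
    rw [norm_conj, hnz, hnormα] at this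
    rw [this]
    simp [norm]

/-- If `p ≡ 2 (mod 3)` is a prime dividing `u² - uv + v²`, then `p ∣ u` and `p ∣ v`. -/
lemma inert (p : ℕ) (hp : p.Prime) (h2 : p % 3 = 2) (u v : ℤ)
    (hdvd : (p : ℤ) ∣ u ^ 2 - u * v + v ^ 2) : (p : ℤ) ∣ u ∧ (p : ℤ) ∣ v := by
  haveI : Fact p.Prime := ⟨hp⟩
  set U : ZMod p := (u : ZMod p) with hU
  set V : ZMod p := (v : ZMod p) with hV
  have heq : U ^ 2 - U * V + V ^ 2 = 0 := by
    rw [hU, hV]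
    have : ((u ^ 2 - u * v + v ^ 2 : ℤ) : ZMod p) = 0 :=
      (ZMod.intCast_zmod_eq_zero_iff_dvd _ p).2 hdvd
    push_cast at this
    linear_combination this
  have hVzero : V = 0 := by
    by_contra hV0
    set ξ : ZMod p := -(U * V⁻¹) with hξ
    have hc : ξ ^ 2 + ξ + 1 = 0 := by
      have hVinv : V * V⁻¹ = 1 := ZMod.mul_inv_of_unit V (Ne.isUnit hV0)
      have h0 : (U ^ 2 - U * V + V ^ 2) * (V⁻¹ * V⁻¹) = 0 := by rw [heq]; ring
      calc ξ ^ 2 + ξ + 1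
          = (U ^ 2 - U * V + V ^ 2) * (V⁻¹ * V⁻¹)
            + (1 - V * V⁻¹) * (1 + V * V⁻¹ - U * V⁻¹) := by rw [hξ]; ring
        _ = 0 := by rw [h0, hVinv]; ring
    have hξ3 : ξ ^ 3 = 1 := by linear_combination (ξ - 1) * hc
    have hξ1 : ξ ≠ 1 := by
      intro h
      rw [h] at hc
      have h3 : (3 : ZMod p) = 0 := by linear_combination hc
      have hd3 : (p : ℕ) ∣ 3 := by
        have := (ZMod.natCast_eq_zero_iff 3 p).1 (by exact_mod_cast h3)
        exact this
      have hle := Nat.le_of_dvd (by norm_num) hd3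
      have h2le := hp.two_le
      interval_cases p <;> omega
    have hunit : IsUnit ξ := IsUnit.of_mul_eq_one (ξ ^ 2) (by linear_combination hξ3)
    set x : (ZMod p)ˣ := hunit.unit with hx
    have hx3 : x ^ 3 = 1 := by
      ext
      rw [Units.val_pow_eq_pow_val, IsUnit.unit_spec, Units.val_one]
      exact hξ3
    have hx1 : x ≠ 1 := by
      intro h
      apply hξ1
      have := congrArg Units.val h
      rwa [IsUnit.unit_spec, Units.val_one] at this
    have hord : orderOf x = 3 := by
      have hdvd3 : orderOf x ∣ 3 := orderOf_dvd_of_pow_eq_one hx3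
      rcases (Nat.prime_three.eq_one_or_self_of_dvd _ hdvd3) with h | h
      · exact absurd (orderOf_eq_one_iff.1 h) hx1
      · exact h
    have hcard : (3 : ℕ) ∣ p - 1 := by
      rw [← hord]
      have := orderOf_dvd_card (x := x)
      rwa [ZMod.card_units_eq_totient, Nat.totient_prime hp] at this
    have hp2 : 2 ≤ p := hp.two_le
    omega
  have hUzero : U = 0 := by
    rw [hVzero] at heq
    have : U ^ 2 = 0 := by linear_combination heq
    exact pow_eq_zero_iff (n := 2) (by norm_num) |>.1 this
  constructor
  · exact (ZMod.intCast_zmod_eq_zero_iff_dvd u p).1 hUzero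
  · exact (ZMod.intCast_zmod_eq_zero_iff_dvd v p).1 hVzero

end Eis

namespace NT

lemma fiber (m : ℤ) : ∀ (n : ℕ) (t u v : ℤ), t.natAbs = n → t ≠ 0 →
    t ^ 2 * m = u ^ 2 - u * v + v ^ 2 → ∃ a b : ℤ, m = a ^ 2 - a * b + b ^ 2 := by
  intro n
  induction n using Nat.strong_induction_on with
  | _ n ih =>
    intro t u v hn ht heq
    rcases eq_or_ne n 1 with h1 | h1
    · have ht2 : t ^ 2 = 1 := by
        have : t = 1 ∨ t = -1 := by omega
        rcases this with rfl | rfl <;> norm_num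
      exact ⟨u, v, by rw [ht2] at heq; linarith⟩
    · have hn0 : n ≠ 0 := by
        intro h; rw [h] at hn; exact ht (Int.natAbs_eq_zero.1 hn)
      have hn2 : 2 ≤ n := by omega
      set p := n.minFac with hpdef
      have hp : p.Prime := Nat.minFac_prime h1
      have hpn : p ∣ n := Nat.minFac_dvd n
      have hpt : (p : ℤ) ∣ t := by
        rw [Int.natCast_dvd]
        rw [hn]
        exact hpn
      obtain ⟨t', htt⟩ := hpt
      have ht' : t' ≠ 0 := by
        intro h; rw [h, mul_zero] at htt; exact ht htt
      set n' := t'.natAbs with hn'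
      have hnn' : n = p * n' := by
        rw [← hn, htt, Int.natAbs_mul, Int.natAbs_natCast]
      have hn'lt : n' < n := by
        have h2 : 2 ≤ p := hp.two_le
        have h1' : 1 ≤ n' := by
          have : n' ≠ 0 := fun h => ht' (Int.natAbs_eq_zero.1 h)
          omega
        calc n' < 2 * n' := by omega
          _ ≤ p * n' := by exact Nat.mul_le_mul_right n' h2
          _ = n := hnn'.symm
      have hpQ : (p : ℤ) ^ 2 ∣ u ^ 2 - u * v + v ^ 2 := by
        rw [← heq, htt]
        exact ⟨t' ^ 2 * m, by ring⟩
      have hp3 : p % 3 = 2 ∨ p = 3 ∨ p % 3 = 1 := by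
        rcases eq_or_ne (p % 3) 0 with h | h
        · have h3 : (3 : ℕ) ∣ p := Nat.dvd_of_mod_eq_zero h
          rcases hp.eq_one_or_self_of_dvd 3 h3 with h' | h' <;> omega
        · omega
      rcases hp3 with hcase | hcase
      · -- inert: p ∣ u and p ∣ v
        obtain ⟨hu, hv⟩ := Eis.inert p hp hcase u v (dvd_trans ⟨(p:ℤ), by ring⟩ hpQ)
        obtain ⟨u', hu'⟩ := hu
        obtain ⟨v', hv'⟩ := hv
        have heq' : t' ^ 2 * m = u' ^ 2 - u' * v' + v' ^ 2 := by
          have hpne : (p : ℤ) ≠ 0 := by exact_mod_cast hp.ne_zero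
          have : (p : ℤ) ^ 2 * (t' ^ 2 * m) = (p : ℤ) ^ 2 * (u' ^ 2 - u' * v' + v' ^ 2) := by
            rw [htt, hu', hv'] at heq
            linear_combination heq
          exact mul_left_cancel₀ (pow_ne_zero 2 hpne) this
        exact ih n' hn'lt t' u' v' rfl ht' heq'
      · -- split: divide the form by p twice
        have hsplit : p = 3 ∨ p % 3 = 1 := hcase
        have hpdvd : (p : ℤ) ∣ u ^ 2 - u * v + v ^ 2 := dvd_trans ⟨(p:ℤ), by ring⟩ hpQ
        obtain ⟨a₁, b₁, hQ1⟩ := Eis.step_split p hp hsplit u v hpdvd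
        have hpne : (p : ℤ) ≠ 0 := by exact_mod_cast hp.ne_zero
        have hpdvd1 : (p : ℤ) ∣ a₁ ^ 2 - a₁ * b₁ + b₁ ^ 2 := by
          obtain ⟨k, hk⟩ := hpQ
          have : (p : ℤ) * (a₁ ^ 2 - a₁ * b₁ + b₁ ^ 2) = (p : ℤ) * ((p : ℤ) * k) := by
            rw [← hQ1, hk]; ring
          have := mul_left_cancel₀ hpne this
          exact ⟨k, this⟩
        obtain ⟨a₂, b₂, hQ2⟩ := Eis.step_split p hp hsplit a₁ b₁ hpdvd1
        have heq' : t' ^ 2 * m = a₂ ^ 2 - a₂ * b₂ + b₂ ^ 2 := by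
          have : (p : ℤ) ^ 2 * (t' ^ 2 * m) = (p : ℤ) ^ 2 * (a₂ ^ 2 - a₂ * b₂ + b₂ ^ 2) := by
            rw [htt] at heq
            rw [hQ2] at hQ1
            linear_combination heq + hQ1
          exact mul_left_cancel₀ (pow_ne_zero 2 hpne) this
        exact ih n' hn'lt t' a₂ b₂ rfl ht' heq'

lemma fiber' (t u v m : ℤ) (ht : t ≠ 0) (heq : t ^ 2 * m = u ^ 2 - u * v + v ^ 2) :
    ∃ a b : ℤ, m = a ^ 2 - a * b + b ^ 2 :=
  fiber m t.natAbs t u v rfl ht heq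

lemma two_split (u v : ℤ) (h : (2 : ℤ) ∣ u ^ 2 - u * v + v ^ 2) :
    ∃ a b : ℤ, u ^ 2 - u * v + v ^ 2 = 4 * (a ^ 2 - a * b + b ^ 2) := by
  obtain ⟨hu, hv⟩ := Eis.inert 2 Nat.prime_two rfl u v (by exact_mod_cast h)
  obtain ⟨a, ha⟩ := hu
  obtain ⟨b, hb⟩ := hv
  exact ⟨a, b, by rw [ha, hb]; ring⟩

lemma three_split (u v : ℤ) (h : (3 : ℤ) ∣ u ^ 2 - u * v + v ^ 2) :
    ∃ a b : ℤ, u ^ 2 - u * v + v ^ 2 = 3 * (a ^ 2 - a * b + b ^ 2) := by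
  have := Eis.step_split 3 Nat.prime_three (Or.inl rfl) u v (by exact_mod_cast h)
  exact_mod_cast this

/-- Conclusion for the `d ≡ 0 (mod 6)` case. -/
lemma sol0 (d A B C : ℤ) (hC : C ≠ 0) (h : d * C ^ 2 = 6 * (A ^ 2 - A * B + B ^ 2)) :
    ∃ a b : ℤ, 2 * (a ^ 2 - a * b + b ^ 2) = d := by
  have hQ : C ^ 2 * (6 * d) = (6 * A) ^ 2 - (6 * A) * (6 * B) + (6 * B) ^ 2 := by
    linear_combination 6 * h
  obtain ⟨a, b, hab⟩ := fiber' C (6 * A) (6 * B) (6 * d) hC hQ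
  have h2 : (2 : ℤ) ∣ a ^ 2 - a * b + b ^ 2 := ⟨3 * d, by omega⟩
  obtain ⟨a₁, b₁, h4⟩ := two_split a b h2
  have h3d : 3 * d = 2 * (a₁ ^ 2 - a₁ * b₁ + b₁ ^ 2) := by omega
  have h3 : (3 : ℤ) ∣ a₁ ^ 2 - a₁ * b₁ + b₁ ^ 2 := by omega
  obtain ⟨a₂, b₂, h9⟩ := three_split a₁ b₁ h3
  exact ⟨a₂, b₂, by omega⟩

/-- Conclusion for the `d ≡ 2 (mod 6)` case. -/
lemma sol2 (d U V C : ℤ) (hC : C ≠ 0) (h : 3 * (d * C ^ 2) = 2 * (U ^ 2 - U * V + V ^ 2)) :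
    ∃ a b : ℤ, 2 * (a ^ 2 - a * b + b ^ 2) = d := by
  have h3 : (3 : ℤ) ∣ U ^ 2 - U * V + V ^ 2 := by omega
  obtain ⟨a₁, b₁, h9⟩ := three_split U V h3
  have hd1 : d * C ^ 2 = 2 * (a₁ ^ 2 - a₁ * b₁ + b₁ ^ 2) := by omega
  have hQ : C ^ 2 * (2 * d) = (2 * a₁) ^ 2 - (2 * a₁) * (2 * b₁) + (2 * b₁) ^ 2 := by
    linear_combination 2 * hd1
  obtain ⟨a, b, hab⟩ := fiber' C (2 * a₁) (2 * b₁) (2 * d) hC hQ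
  have h2 : (2 : ℤ) ∣ a ^ 2 - a * b + b ^ 2 := ⟨d, by omega⟩
  obtain ⟨a₂, b₂, h4⟩ := two_split a b h2
  exact ⟨a₂, b₂, by omega⟩

end NT

namespace Stmt8

/-- normal form of vectors supported on coordinates 16,17,20,21,22,23 -/
noncomputable def nf (a b c d e f : ℤ) : Fin 24 → ℤ :=
  Pi.single 16 a + Pi.single 17 b + Pi.single 20 c + Pi.single 21 d +
    Pi.single 22 e + Pi.single 23 f

lemma MB_add_right (x y z : Fin 24 → ℤ) : MB x (y + z) = MB x y + MB x z := by
  simp only [MB, Pi.add_apply, ← Finset.sum_add_distrib]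
  refine Finset.sum_congr rfl fun i _ => Finset.sum_congr rfl fun j _ => ?_
  ring

lemma MB_smul_right (c : ℤ) (x y : Fin 24 → ℤ) : MB x (c • y) = c * MB x y := by
  simp only [MB, Finset.mul_sum]
  refine Finset.sum_congr rfl fun i _ => Finset.sum_congr rfl fun j _ => ?_
  simp only [Pi.smul_apply, smul_eq_mul]; ring

lemma MB_single (i j : Fin 24) (c d : ℤ) :
    MB (Pi.single i c) (Pi.single j d) = gramM i j * c * d := by
  unfold MB
  rw [Finset.sum_eq_single i]
  · rw [Finset.sum_eq_single j]
    · simp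
    · intro b _ hb; simp [Pi.single_eq_of_ne hb]
    · intro h; exact absurd (Finset.mem_univ j) h
  · intro b _ hb
    apply Finset.sum_eq_zero
    intro j' _
    simp [Pi.single_eq_of_ne hb]
  · intro h; exact absurd (Finset.mem_univ i) h

lemma gram_16_16 : gramM 16 16 = 0 := by decide
lemma gram_16_17 : gramM 16 17 = 1 := by decide
lemma gram_16_20 : gramM 16 20 = 0 := by decide
lemma gram_16_21 : gramM 16 21 = 0 := by decide
lemma gram_16_22 : gramM 16 22 = 0 := by decide
lemma gram_16_23 : gramM 16 23 = 0 := by decide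
lemma gram_17_16 : gramM 17 16 = 1 := by decide
lemma gram_17_17 : gramM 17 17 = 0 := by decide
lemma gram_17_20 : gramM 17 20 = 0 := by decide
lemma gram_17_21 : gramM 17 21 = 0 := by decide
lemma gram_17_22 : gramM 17 22 = 0 := by decide
lemma gram_17_23 : gramM 17 23 = 0 := by decide
lemma gram_20_16 : gramM 20 16 = 0 := by decide
lemma gram_20_17 : gramM 20 17 = 0 := by decide
lemma gram_20_20 : gramM 20 20 = 0 := by decide
lemma gram_20_21 : gramM 20 21 = 1 := by decide
lemma gram_20_22 : gramM 20 22 = 0 := by decide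
lemma gram_20_23 : gramM 20 23 = 0 := by decide
lemma gram_21_16 : gramM 21 16 = 0 := by decide
lemma gram_21_17 : gramM 21 17 = 0 := by decide
lemma gram_21_20 : gramM 21 20 = 1 := by decide
lemma gram_21_21 : gramM 21 21 = 0 := by decide
lemma gram_21_22 : gramM 21 22 = 0 := by decide
lemma gram_21_23 : gramM 21 23 = 0 := by decide
lemma gram_22_16 : gramM 22 16 = 0 := by decide
lemma gram_22_17 : gramM 22 17 = 0 := by decide
lemma gram_22_20 : gramM 22 20 = 0 := by decide
lemma gram_22_21 : gramM 22 21 = 0 := by decide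
lemma gram_22_22 : gramM 22 22 = 0 := by decide
lemma gram_22_23 : gramM 22 23 = -1 := by decide
lemma gram_23_16 : gramM 23 16 = 0 := by decide
lemma gram_23_17 : gramM 23 17 = 0 := by decide
lemma gram_23_20 : gramM 23 20 = 0 := by decide
lemma gram_23_21 : gramM 23 21 = 0 := by decide
lemma gram_23_22 : gramM 23 22 = -1 := by decide
lemma gram_23_23 : gramM 23 23 = 0 := by decide

lemma MB_nf (a b c d e f a' b' c' d' e' f' : ℤ) :
    MB (nf a b c d e f) (nf a' b' c' d' e' f') =
      a * b' + b * a' + c * d' + d * c' - e * f' - f * e' := by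
  simp only [nf, MB_add_left, MB_add_right, MB_single, gram_16_16, gram_16_17, gram_16_20, gram_16_21, gram_16_22, gram_16_23, gram_17_16, gram_17_17, gram_17_20, gram_17_21, gram_17_22, gram_17_23, gram_20_16, gram_20_17, gram_20_20, gram_20_21, gram_20_22, gram_20_23, gram_21_16, gram_21_17, gram_21_20, gram_21_21, gram_21_22, gram_21_23, gram_22_16, gram_22_17, gram_22_20, gram_22_21, gram_22_22, gram_22_23, gram_23_16, gram_23_17, gram_23_20, gram_23_21, gram_23_22, gram_23_23]
  ring

lemma single_neg (i : Fin 24) (c : ℤ) : (Pi.single i (-c) : Fin 24 → ℤ) = -Pi.single i c := by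
  ext j
  by_cases h : j = i
  · subst h; simp
  · simp [Pi.single_eq_of_ne h]

lemma single_smul' (i : Fin 24) (c x : ℤ) : c • (Pi.single i x : Fin 24 → ℤ) = Pi.single i (c * x) := by
  ext j
  by_cases h : j = i
  · subst h; simp
  · simp [Pi.single_eq_of_ne h]

lemma single_zero (i : Fin 24) : (Pi.single i (0 : ℤ) : Fin 24 → ℤ) = 0 := by
  ext j
  by_cases h : j = i
  · subst h; simp
  · simp [Pi.single_eq_of_ne h]

lemma single_add (i : Fin 24) (c d : ℤ) :
    (Pi.single i (c + d) : Fin 24 → ℤ) = Pi.single i c + Pi.single i d := by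
  ext j
  by_cases h : j = i
  · subst h; simp
  · simp [Pi.single_eq_of_ne h]

lemma l1_nf : l1 = nf 0 0 0 0 1 (-1) := by
  rw [l1, nf, single_zero 16, single_zero 17, single_zero 20, single_zero 21, single_neg 23 1]
  abel

lemma l2_nf : l2 = nf 0 0 1 1 0 1 := by
  rw [l2, nf, single_zero 16, single_zero 17, single_zero 22]
  abel

lemma vd0_nf {d : ℤ} (h0 : d % 6 = 0) : vdM d = nf 1 (-(d / 6)) 0 0 0 0 := by
  rw [vdM, if_pos h0, nf, single_zero 20, single_zero 21, single_zero 22, single_zero 23,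
    single_smul', mul_one, single_neg 17 (d / 6)]
  abel

lemma vd2_nf {d : ℤ} (h2 : d % 6 = 2) :
    vdM d = nf 3 (-(3 * ((d - 2) / 6))) 2 (-1) 1 1 := by
  rw [vdM, if_neg (by omega), m1, m2, nf]
  rw [smul_sub, smul_smul, single_smul', single_smul']
  simp only [mul_one]
  rw [single_neg 17 (3 * ((d - 2) / 6)), single_neg 21 1,
    show (Pi.single 20 (2 : ℤ) : Fin 24 → ℤ) = Pi.single 20 1 + Pi.single 20 1 by
      rw [show (2 : ℤ) = 1 + 1 by norm_num, single_add]]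
  abel

lemma nf_16 (a b c d e f : ℤ) : nf a b c d e f 16 = a := by
  simp only [nf, Pi.add_apply]
  rw [Pi.single_eq_same, Pi.single_eq_of_ne (show (16 : Fin 24) ≠ 17 by decide), Pi.single_eq_of_ne (show (16 : Fin 24) ≠ 20 by decide), Pi.single_eq_of_ne (show (16 : Fin 24) ≠ 21 by decide), Pi.single_eq_of_ne (show (16 : Fin 24) ≠ 22 by decide), Pi.single_eq_of_ne (show (16 : Fin 24) ≠ 23 by decide)]
  ring

lemma nf_17 (a b c d e f : ℤ) : nf a b c d e f 17 = b := by
  simp only [nf, Pi.add_apply]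
  rw [Pi.single_eq_of_ne (show (17 : Fin 24) ≠ 16 by decide), Pi.single_eq_same, Pi.single_eq_of_ne (show (17 : Fin 24) ≠ 20 by decide), Pi.single_eq_of_ne (show (17 : Fin 24) ≠ 21 by decide), Pi.single_eq_of_ne (show (17 : Fin 24) ≠ 22 by decide), Pi.single_eq_of_ne (show (17 : Fin 24) ≠ 23 by decide)]
  ring

lemma nf_20 (a b c d e f : ℤ) : nf a b c d e f 20 = c := by
  simp only [nf, Pi.add_apply]
  rw [Pi.single_eq_of_ne (show (20 : Fin 24) ≠ 16 by decide), Pi.single_eq_of_ne (show (20 : Fin 24) ≠ 17 by decide), Pi.single_eq_same, Pi.single_eq_of_ne (show (20 : Fin 24) ≠ 21 by decide), Pi.single_eq_of_ne (show (20 : Fin 24) ≠ 22 by decide), Pi.single_eq_of_ne (show (20 : Fin 24) ≠ 23 by decide)]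
  ring

lemma nf_21 (a b c d e f : ℤ) : nf a b c d e f 21 = d := by
  simp only [nf, Pi.add_apply]
  rw [Pi.single_eq_of_ne (show (21 : Fin 24) ≠ 16 by decide), Pi.single_eq_of_ne (show (21 : Fin 24) ≠ 17 by decide), Pi.single_eq_of_ne (show (21 : Fin 24) ≠ 20 by decide), Pi.single_eq_same, Pi.single_eq_of_ne (show (21 : Fin 24) ≠ 22 by decide), Pi.single_eq_of_ne (show (21 : Fin 24) ≠ 23 by decide)]
  ring

lemma nf_22 (a b c d e f : ℤ) : nf a b c d e f 22 = e := by
  simp only [nf, Pi.add_apply]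
  rw [Pi.single_eq_of_ne (show (22 : Fin 24) ≠ 16 by decide), Pi.single_eq_of_ne (show (22 : Fin 24) ≠ 17 by decide), Pi.single_eq_of_ne (show (22 : Fin 24) ≠ 20 by decide), Pi.single_eq_of_ne (show (22 : Fin 24) ≠ 21 by decide), Pi.single_eq_same, Pi.single_eq_of_ne (show (22 : Fin 24) ≠ 23 by decide)]
  ring

lemma nf_23 (a b c d e f : ℤ) : nf a b c d e f 23 = f := by
  simp only [nf, Pi.add_apply]
  rw [Pi.single_eq_of_ne (show (23 : Fin 24) ≠ 16 by decide), Pi.single_eq_of_ne (show (23 : Fin 24) ≠ 17 by decide), Pi.single_eq_of_ne (show (23 : Fin 24) ≠ 20 by decide), Pi.single_eq_of_ne (show (23 : Fin 24) ≠ 21 by decide), Pi.single_eq_of_ne (show (23 : Fin 24) ≠ 22 by decide), Pi.single_eq_same]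
  ring

lemma mem_span3 {v3 x : Fin 24 → ℤ}
    (h : x ∈ Submodule.span ℤ ({l1, l2, v3} : Set (Fin 24 → ℤ))) :
    ∃ a b c : ℤ, x = a • l1 + (b • l2 + c • v3) := by
  rw [Submodule.mem_span_insert] at h
  obtain ⟨a, z, hz, rfl⟩ := h
  rw [Submodule.mem_span_insert] at hz
  obtain ⟨b, z', hz', rfl⟩ := hz
  rw [Submodule.mem_span_singleton] at hz'
  obtain ⟨c, rfl⟩ := hz'
  exact ⟨a, b, c, rfl⟩

lemma MB_zero_left (y : Fin 24 → ℤ) : MB 0 y = 0 := by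
  have := MB_smul_left 0 y y
  simpa using this

lemma Q_eq_zero {A B : ℤ} (h : A ^ 2 - A * B + B ^ 2 = 0) : A = 0 ∧ B = 0 := by
  constructor
  · nlinarith [sq_nonneg (2 * A - B), sq_nonneg (2 * B - A), sq_nonneg A, sq_nonneg B]
  · nlinarith [sq_nonneg (2 * A - B), sq_nonneg (2 * B - A), sq_nonneg A, sq_nonneg B]

lemma nf_zero : nf 0 0 0 0 0 0 = 0 := by
  simp only [nf, single_zero]; abel

lemma nf_smul (r a b c d e f : ℤ) :
    r • nf a b c d e f = nf (r * a) (r * b) (r * c) (r * d) (r * e) (r * f) := by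
  simp only [nf, smul_add, single_smul']

lemma nf_add (a b c d e f a' b' c' d' e' f' : ℤ) :
    nf a b c d e f + nf a' b' c' d' e' f' =
      nf (a + a') (b + b') (c + c') (d + d') (e + e') (f + f') := by
  simp only [nf, single_add]
  abel

lemma comb0_nf (A B C k : ℤ) :
    A • l1 + (B • l2 + C • nf 1 (-k) 0 0 0 0) =
      nf C (-(k * C)) B B A (-A + B) := by
  rw [l1_nf, l2_nf]
  simp only [nf_smul, nf_add]
  congr 1 <;> ring

lemma comb2_nf (A B C k : ℤ) :
    A • l1 + (B • l2 + C • nf 1 (-k) 1 0 0 1) =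
      nf C (-(k * C)) (B + C) B A (-A + B + C) := by
  rw [l1_nf, l2_nf]
  simp only [nf_smul, nf_add]
  congr 1 <;> ring

lemma comb2v_nf (A B C k : ℤ) :
    A • l1 + (B • l2 + C • nf 3 (-(3 * k)) 2 (-1) 1 1) =
      nf (3 * C) (-(3 * (k * C))) (B + 2 * C) (B - C) (A + C) (-A + B + C) := by
  rw [l1_nf, l2_nf]
  simp only [nf_smul, nf_add]
  congr 1 <;> ring

lemma comb_mem_Ld (d A B C : ℤ) : A • l1 + (B • l2 + C • vdM d) ∈ LdSub d := by
  refine ⟨1, one_ne_zero, ?_⟩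
  rw [one_smul]
  refine Submodule.add_mem _ ?_ (Submodule.add_mem _ ?_ ?_)
  · exact Submodule.smul_mem _ _ (Submodule.subset_span (by simp))
  · exact Submodule.smul_mem _ _ (Submodule.subset_span (by simp))
  · exact Submodule.smul_mem _ _ (Submodule.subset_span (by simp))

lemma decomp0 {d : ℤ} (h0 : d % 6 = 0) {x : Fin 24 → ℤ} (hx : x ∈ LdSub d) :
    x = (x 22) • l1 + ((x 20) • l2 + (x 16) • vdM d) := by
  obtain ⟨n, hn, hmem⟩ := hx
  obtain ⟨a, b, c, h⟩ := mem_span3 hmem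
  have hv := vd0_nf h0
  have e22 : n * x 22 = a := by
    have h' := congrFun h 22
    simp only [Pi.smul_apply, smul_eq_mul, Pi.add_apply, l1_nf, l2_nf, hv,
      nf_22] at h'
    linarith
  have e20 : n * x 20 = b := by
    have h' := congrFun h 20
    simp only [Pi.smul_apply, smul_eq_mul, Pi.add_apply, l1_nf, l2_nf, hv,
      nf_20] at h'
    linarith
  have e16 : n * x 16 = c := by
    have h' := congrFun h 16
    simp only [Pi.smul_apply, smul_eq_mul, Pi.add_apply, l1_nf, l2_nf, hv,
      nf_16] at h'
    linarith
  have h' : n • x = n • ((x 22) • l1 + ((x 20) • l2 + (x 16) • vdM d)) := by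
    rw [h, ← e22, ← e20, ← e16]
    rw [smul_add, smul_add, smul_smul, smul_smul, smul_smul]
  exact smul_right_injective (Fin 24 → ℤ) hn h'

lemma decomp2 {d : ℤ} (h2 : d % 6 = 2) {x : Fin 24 → ℤ} (hx : x ∈ LdSub d) :
    x = (x 22) • l1 + ((x 21) • l2 + (x 16) • nf 1 (-((d - 2) / 6)) 1 0 0 1) := by
  obtain ⟨n, hn, hmem⟩ := hx
  obtain ⟨a, b, c, h⟩ := mem_span3 hmem
  have hcomb : a • l1 + (b • l2 + c • vdM d) =
      (a + c) • l1 + ((b - c) • l2 + (3 * c) • nf 1 (-((d - 2) / 6)) 1 0 0 1) := by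
    rw [vd2_nf h2, l1_nf, l2_nf]
    simp only [nf_smul, nf_add]
    congr 1 <;> ring
  rw [hcomb] at h
  have e22 : n * x 22 = a + c := by
    have h' := congrFun h 22
    simp only [Pi.smul_apply, smul_eq_mul, Pi.add_apply, l1_nf, l2_nf, nf_22] at h'
    linarith
  have e21 : n * x 21 = b - c := by
    have h' := congrFun h 21
    simp only [Pi.smul_apply, smul_eq_mul, Pi.add_apply, l1_nf, l2_nf, nf_21] at h'
    linarith
  have e16 : n * x 16 = 3 * c := by
    have h' := congrFun h 16
    simp only [Pi.smul_apply, smul_eq_mul, Pi.add_apply, l1_nf, l2_nf, nf_16] at h'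
    linarith
  have h' : n • x = n • ((x 22) • l1 + ((x 21) • l2 +
      (x 16) • nf 1 (-((d - 2) / 6)) 1 0 0 1)) := by
    rw [h, ← e22, ← e21, ← e16]
    rw [smul_add, smul_add, smul_smul, smul_smul, smul_smul]
  exact smul_right_injective (Fin 24 → ℤ) hn h'

end Stmt8

/-- For a positive integer `d ≡ 0` or `2 (mod 6)`, the lattice `L_d` contains a
copy of `U(n)` for some `n ≠ 0` iff `d` is represented by `A₂`, i.e. `2(a² - ab + b²) = d`
for some integers `a, b`. -/
theorem stmt_8 (d : ℤ) (hd : 0 < d) (h6 : d % 6 = 0 ∨ d % 6 = 2) :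
    (∃ n : ℤ, n ≠ 0 ∧ ∃ x y : Fin 24 → ℤ, x ∈ LdSub d ∧ y ∈ LdSub d ∧
      MB x x = 0 ∧ MB y y = 0 ∧ MB x y = n) ↔
    (∃ a b : ℤ, 2 * (a ^ 2 - a * b + b ^ 2) = d) := by
  open Stmt8 in
  constructor
  · rintro ⟨n, hn, x, y, hx, hy, hxx, hyy, hxy⟩
    rcases h6 with h0 | h2
    · -- d ≡ 0 (mod 6)
      set k := d / 6 with hkdef
      have hk : 6 * k = d := by omega
      set A := x 22 with hA
      set B := x 20 with hB
      set C := x 16 with hC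
      have hxnf : x = nf C (-(k * C)) B B A (-A + B) := by
        rw [decomp0 h0 hx, vd0_nf h0, ← hkdef, comb0_nf]
      have heq : 2 * A ^ 2 - 2 * A * B + 2 * B ^ 2 - 2 * k * C ^ 2 = 0 := by
        rw [hxnf, MB_nf] at hxx
        linarith
      have hCne : C ≠ 0 := by
        intro hC0
        have hq : A ^ 2 - A * B + B ^ 2 = 0 := by rw [hC0] at heq; linarith
        obtain ⟨hA0, hB0⟩ := Q_eq_zero hq
        have hx0 : x = nf 0 0 0 0 0 0 := by
          rw [hxnf, hA0, hB0, hC0]; congr 1 <;> ring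
        rw [hx0, nf_zero, MB_zero_left] at hxy
        exact hn hxy.symm
      exact NT.sol0 d A B C hCne (by linear_combination (-3) * heq - C ^ 2 * hk)
    · -- d ≡ 2 (mod 6)
      set k := (d - 2) / 6 with hkdef
      have hk : 6 * k + 2 = d := by omega
      set A := x 22 with hA
      set B := x 21 with hB
      set C := x 16 with hC
      have hxnf : x = nf C (-(k * C)) (B + C) B A (-A + B + C) := by
        rw [decomp2 h2 hx, ← hkdef, comb2_nf]
      have heq : 2 * A ^ 2 - 2 * A * B - 2 * A * C + 2 * B ^ 2 + 2 * B * C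
          - 2 * k * C ^ 2 = 0 := by
        rw [hxnf, MB_nf] at hxx
        linarith
      have hCne : C ≠ 0 := by
        intro hC0
        have hq : A ^ 2 - A * B + B ^ 2 = 0 := by rw [hC0] at heq; linarith
        obtain ⟨hA0, hB0⟩ := Q_eq_zero hq
        have hx0 : x = nf 0 0 0 0 0 0 := by
          rw [hxnf, hA0, hB0, hC0]; congr 1 <;> ring
        rw [hx0, nf_zero, MB_zero_left] at hxy
        exact hn hxy.symm
      exact NT.sol2 d (3 * A - C) (3 * B + C) C hCne
        (by linear_combination (-9) * heq - 3 * C ^ 2 * hk)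
  · rintro ⟨a, b, hab⟩
    rcases h6 with h0 | h2
    · -- d ≡ 0 (mod 6)
      set k := d / 6 with hkdef
      have hk : 6 * k = d := by omega
      refine ⟨6 * d, by omega, (a + b) • l1 + ((2 * b - a) • l2 + (3 : ℤ) • vdM d),
        (a + b) • l1 + ((2 * b - a) • l2 + (-3 : ℤ) • vdM d),
        comb_mem_Ld d _ _ _, comb_mem_Ld d _ _ _, ?_, ?_, ?_⟩
      · rw [vd0_nf h0, ← hkdef, comb0_nf, MB_nf]
        linear_combination 3 * hab - 3 * hk
      · rw [vd0_nf h0, ← hkdef, comb0_nf, MB_nf]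
        linear_combination 3 * hab - 3 * hk
      · rw [vd0_nf h0, ← hkdef, comb0_nf, comb0_nf, MB_nf]
        linear_combination 3 * hab + 3 * hk
    · -- d ≡ 2 (mod 6)
      set k := (d - 2) / 6 with hkdef
      have hk : 6 * k + 2 = d := by omega
      refine ⟨6 * d, by omega, (a + b) • l1 + ((2 * b - a) • l2 + (1 : ℤ) • vdM d),
        (a + b) • l1 + ((2 * b - a) • l2 + (-1 : ℤ) • vdM d),
        comb_mem_Ld d _ _ _, comb_mem_Ld d _ _ _, ?_, ?_, ?_⟩
      · rw [vd2_nf h2, ← hkdef, comb2v_nf, MB_nf]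
        linear_combination 3 * hab - 3 * hk
      · rw [vd2_nf h2, ← hkdef, comb2v_nf, MB_nf]
        linear_combination 3 * hab - 3 * hk
      · rw [vd2_nf h2, ← hkdef, comb2v_nf, comb2v_nf, MB_nf]
        linear_combination 3 * hab + 3 * hk
end
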